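/- arXiv:1009.4736 — 4 statements merged into one kernel-verified Lean document; each statement's English description precedes it below -/
import Mathlib

section
/- Let Π be a 3-decomposable 30-half-period. Then N_k^{bi}(Π) = 3k for every k = 1, 2, …, 10. -/
/-- An `n`-half-period: a sequence `π_0, …, π_{n(n-1)/2}` of arrangements of `n`
labeled elements in the positions `1, …, n` (recorded by `pos t x` = the position of
element `x` at time `t`), in which consecutive arrangements differ by a transposition
of the elements in two adjacent positions, and the last arrangement is the reverse of
the first. -/
structure HalfPeriod (n : ℕ) where
  pos : ℕ → Fin n → ℕ
  pos_mem : ∀ t, t ≤ n * (n - 1) / 2 → ∀ x, 1 ≤ pos t x ∧ pos t x ≤ n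
  pos_inj : ∀ t, t ≤ n * (n - 1) / 2 → Function.Injective (pos t)
  step : ∀ t, t < n * (n - 1) / 2 → ∃ x y : Fin n,
    pos t y = pos t x + 1 ∧ pos (t + 1) x = pos t x + 1 ∧ pos (t + 1) y = pos t x ∧
    ∀ z, z ≠ x → z ≠ y → pos (t + 1) z = pos t z
  reverse : ∀ x, pos (n * (n - 1) / 2) x = n + 1 - pos 0 x

namespace HalfPeriod

variable {n : ℕ}

/-- The number of transposition steps of an `n`-half-period. -/
def steps (n : ℕ) : ℕ := n * (n - 1) / 2

/-- Element `x` moves (changes position) at step `t`. -/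
def Moved (hp : HalfPeriod n) (t : ℕ) (x : Fin n) : Prop :=
  hp.pos (t + 1) x ≠ hp.pos t x

/-- Step `t` is the transposition of the (distinct) elements `x` and `y`. -/
def SwapsAt (hp : HalfPeriod n) (t : ℕ) (x y : Fin n) : Prop :=
  x ≠ y ∧ hp.Moved t x ∧ hp.Moved t y

/-- Step `t` is an `i`-transposition: it swaps the elements at positions `i` and `i+1`. -/
def GateAt (hp : HalfPeriod n) (t i : ℕ) : Prop :=
  ∃ x y : Fin n, hp.pos t x = i ∧ hp.pos t y = i + 1 ∧
    hp.pos (t + 1) x = i + 1 ∧ hp.pos (t + 1) y = i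

/-- Step `t` is an `i`-critical transposition: an `i`- or an `(n-i)`-transposition. -/
def Critical (hp : HalfPeriod n) (t i : ℕ) : Prop :=
  hp.GateAt t i ∨ hp.GateAt t (n - i)

/-- Step `t` is a `(≤ k)`-critical transposition. -/
def LeCritical (hp : HalfPeriod n) (t k : ℕ) : Prop :=
  ∃ i, 1 ≤ i ∧ i ≤ k ∧ hp.Critical t i

/-- `N_{≤ k}`: the number of `(≤ k)`-critical transpositions of the half-period. -/
noncomputable def NLe (hp : HalfPeriod n) (k : ℕ) : ℕ :=
  {t : ℕ | t < steps n ∧ hp.LeCritical t k}.ncard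

end HalfPeriod
/-- `hp` is a 3-decomposable `30`-half-period, witnessed by the labeling
`A = {a 0, …, a 9}`, `B = {b 0, …, b 9}`, `C = {c 0, …, c 9}` (the element with
1-indexed subscript `j` is `a (j-1)`, etc.): the initial arrangement is
`(a_10, a_9, …, a_1, b_1, …, b_10, c_1, …, c_10)`, every transposition between `A`
and `B` occurs before every transposition between `C` and `A ∪ B`, and every
transposition between `A` and `C` occurs before every transposition between `B`
and `C`. -/
def IsThreeDecompLabeling30 (hp : HalfPeriod 30) (a b c : Fin 10 → Fin 30) : Prop :=
  Function.Injective (Sum.elim a (Sum.elim b c)) ∧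
  (∀ i : Fin 10, hp.pos 0 (a i) = 10 - (i : ℕ)) ∧
  (∀ i : Fin 10, hp.pos 0 (b i) = 11 + (i : ℕ)) ∧
  (∀ i : Fin 10, hp.pos 0 (c i) = 21 + (i : ℕ)) ∧
  (∀ s t, s < HalfPeriod.steps 30 → t < HalfPeriod.steps 30 →
    (∃ i j, hp.SwapsAt s (a i) (b j)) →
    (∃ i x, ((∃ j, x = a j) ∨ (∃ j, x = b j)) ∧ hp.SwapsAt t (c i) x) → s < t) ∧
  (∀ s t, s < HalfPeriod.steps 30 → t < HalfPeriod.steps 30 →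
    (∃ i j, hp.SwapsAt s (a i) (c j)) →
    (∃ i j, hp.SwapsAt t (b i) (c j)) → s < t)

/-- `x` and `y` belong to the same one of the three classes `A`, `B`, `C`. -/
def SameClass (a b c : Fin 10 → Fin 30) (x y : Fin 30) : Prop :=
  (∃ i j, x = a i ∧ y = a j) ∨ (∃ i j, x = b i ∧ y = b j) ∨ (∃ i j, x = c i ∧ y = c j)
/-- `N_k^{bi}`: the number of bichromatic `k`-critical transpositions of `hp`. -/
noncomputable def NkBi (hp : HalfPeriod 30) (a b c : Fin 10 → Fin 30) (k : ℕ) : ℕ :=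
  {t : ℕ | t < HalfPeriod.steps 30 ∧ hp.Critical t k ∧
    ∃ x y, hp.SwapsAt t x y ∧ ¬ SameClass a b c x y}.ncard

open Classical Finset

namespace BCL

variable (hp : HalfPeriod 30)

lemma hlt {t : ℕ} (h : t < 435) : t < 30 * (30 - 1) / 2 := by norm_num; omega

lemma hle {t : ℕ} (h : t ≤ 435) : t ≤ 30 * (30 - 1) / 2 := by norm_num; omega

noncomputable def R (t : ℕ) : Fin 30 :=
  if h : t < 435 then (hp.step t (hlt h)).choose else 0

noncomputable def L (t : ℕ) : Fin 30 :=
  if h : t < 435 then (hp.step t (hlt h)).choose_spec.choose else 0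

noncomputable def G (t : ℕ) : ℕ := hp.pos t (R hp t)

lemma spec {t : ℕ} (h : t < 435) :
    hp.pos t (L hp t) = G hp t + 1 ∧ hp.pos (t+1) (R hp t) = G hp t + 1 ∧
    hp.pos (t+1) (L hp t) = G hp t ∧
    ∀ z, z ≠ R hp t → z ≠ L hp t → hp.pos (t+1) z = hp.pos t z := by
  have h2 := (hp.step t (hlt h)).choose_spec.choose_spec
  simp only [R, L, G, dif_pos h] at *
  exact h2

lemma pos_bounds {t : ℕ} (h : t ≤ 435) (x : Fin 30) :
    1 ≤ hp.pos t x ∧ hp.pos t x ≤ 30 := hp.pos_mem t (hle h) x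

lemma pos_inj' {t : ℕ} (h : t ≤ 435) : Function.Injective (hp.pos t) :=
  hp.pos_inj t (hle h)

lemma posN (x : Fin 30) : hp.pos 435 x = 31 - hp.pos 0 x := by
  have h := hp.reverse x
  norm_num at h
  convert h using 2

lemma R_ne_L {t : ℕ} (h : t < 435) : R hp t ≠ L hp t := by
  intro he
  have h1 := (spec hp h).1
  rw [← he] at h1
  simp only [G] at h1
  omega

lemma moved_iff {t : ℕ} (h : t < 435) (z : Fin 30) :
    hp.pos (t+1) z ≠ hp.pos t z ↔ z = R hp t ∨ z = L hp t := by
  obtain ⟨h1, h2, h3, h4⟩ := spec hp h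
  constructor
  · intro hm
    by_contra hc
    push_neg at hc
    exact hm (h4 z hc.1 hc.2)
  · rintro (rfl | rfl)
    · rw [h2]; simp only [G]; omega
    · rw [h3, h1]; omega



noncomputable def pairAt (t : ℕ) : Sym2 (Fin 30) := s(R hp t, L hp t)

lemma pos_cases {s : ℕ} (h : s < 435) (z : Fin 30) :
    (z = R hp s ∧ hp.pos s z = G hp s ∧ hp.pos (s+1) z = G hp s + 1) ∨
    (z = L hp s ∧ hp.pos s z = G hp s + 1 ∧ hp.pos (s+1) z = G hp s) ∨
    (hp.pos (s+1) z = hp.pos s z ∧ hp.pos s z ≠ G hp s ∧ hp.pos s z ≠ G hp s + 1) := by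
  obtain ⟨h1, h2, h3, h4⟩ := spec hp h
  have hinj := pos_inj' hp (le_of_lt h)
  by_cases hz1 : z = R hp s
  · exact Or.inl ⟨hz1, by rw [hz1]; rfl, by rw [hz1]; exact h2⟩
  by_cases hz2 : z = L hp s
  · exact Or.inr (Or.inl ⟨hz2, by rw [hz2]; exact ⟨h1, h3⟩⟩)
  · exact Or.inr (Or.inr ⟨h4 z hz1 hz2,
      fun hc => hz1 (hinj (hc.trans rfl)),
      fun hc => hz2 (hinj (hc.trans h1.symm))⟩)

lemma step_preserve {s : ℕ} (h : s < 435) {u v : Fin 30}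
    (hne : pairAt hp s ≠ s(u, v)) :
    (hp.pos s u < hp.pos s v ↔ hp.pos (s+1) u < hp.pos (s+1) v) := by
  rcases pos_cases hp h u with ⟨hu, hu1, hu2⟩ | ⟨hu, hu1, hu2⟩ | ⟨hu1, hu2, hu3⟩ <;>
    rcases pos_cases hp h v with ⟨hv, hv1, hv2⟩ | ⟨hv, hv1, hv2⟩ | ⟨hv1, hv2, hv3⟩
  · omega
  · exact absurd (by rw [pairAt, ← hu, ← hv]) hne
  · omega
  · exact absurd (by rw [pairAt, ← hu, ← hv, Sym2.eq_swap]) hne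
  · omega
  · omega
  · omega
  · omega
  · omega

lemma ord_congr (u v : Fin 30) : ∀ t t', t ≤ t' → t' ≤ 435 →
    (∀ s, t ≤ s → s < t' → pairAt hp s ≠ s(u, v)) →
    (hp.pos t u < hp.pos t v ↔ hp.pos t' u < hp.pos t' v) := by
  intro t t' hwe
  induction t', hwe using Nat.le_induction with
  | base => intro _ _; rfl
  | succ m hm ih =>
    intro hmN hno
    have h1 := ih (by omega) (fun s hs1 hs2 => hno s hs1 (by omega))
    have h2 := step_preserve hp (by omega) (hno m hm (by omega))
    exact h1.trans h2

lemma flip_exists {u v : Fin 30} (huv : u ≠ v) :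
    ∃ t, t < 435 ∧ pairAt hp t = s(u, v) := by
  by_contra hc
  push_neg at hc
  have h := ord_congr hp u v 0 435 (by omega) le_rfl
    (fun s _ hs => hc s hs)
  have b0u := pos_bounds hp (by omega : (0:ℕ) ≤ 435) u
  have b0v := pos_bounds hp (by omega : (0:ℕ) ≤ 435) v
  have hNu := posN hp u
  have hNv := posN hp v
  have hne : hp.pos 0 u ≠ hp.pos 0 v := fun hc' => huv (pos_inj' hp (by omega) hc')
  rw [hNu, hNv] at h
  omega

lemma sum_fibers :
    ∑ p ∈ Finset.univ.filter (fun p : Sym2 (Fin 30) => ¬ p.IsDiag),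
      ((Finset.range 435).filter (fun t => pairAt hp t = p)).card = 435 := by
  rw [← Finset.card_eq_sum_card_fiberwise]
  · exact Finset.card_range 435
  · intro t ht
    simp only [Finset.mem_coe, Finset.mem_filter, Finset.mem_univ, true_and, pairAt]
    rw [Sym2.mk_isDiag_iff]
    exact R_ne_L hp (Finset.mem_range.mp ht)

lemma card_pairs :
    (Finset.univ.filter (fun p : Sym2 (Fin 30) => ¬ p.IsDiag)).card = 435 := by
  rw [← Fintype.card_subtype]
  rw [Sym2.card_subtype_not_diag]
  decide

lemma fiber_card_one {u v : Fin 30} (huv : u ≠ v) :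
    ((Finset.range 435).filter (fun t => pairAt hp t = s(u, v))).card = 1 := by
  have hmem : s(u, v) ∈ Finset.univ.filter (fun p : Sym2 (Fin 30) => ¬ p.IsDiag) := by
    simp [Sym2.mk_isDiag_iff, huv]
  have hone : ∀ p ∈ Finset.univ.filter (fun p : Sym2 (Fin 30) => ¬ p.IsDiag),
      1 ≤ ((Finset.range 435).filter (fun t => pairAt hp t = p)).card := by
    intro p hpm
    induction p using Sym2.ind with
    | _ x y =>
      simp only [Finset.mem_filter, Finset.mem_univ, true_and, Sym2.mk_isDiag_iff] at hpm
      obtain ⟨t, ht, hpt⟩ := flip_exists hp hpm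
      exact Finset.card_pos.mpr ⟨t, Finset.mem_filter.mpr ⟨Finset.mem_range.mpr ht, hpt⟩⟩
  by_contra hcne
  have h2 : 2 ≤ ((Finset.range 435).filter (fun t => pairAt hp t = s(u, v))).card := by
    have := hone _ hmem
    omega
  have hlt : (Finset.univ.filter (fun p : Sym2 (Fin 30) => ¬ p.IsDiag)).card <
      ∑ p ∈ Finset.univ.filter (fun p : Sym2 (Fin 30) => ¬ p.IsDiag),
        ((Finset.range 435).filter (fun t => pairAt hp t = p)).card := by
    rw [Finset.card_eq_sum_ones]
    exact Finset.sum_lt_sum hone ⟨s(u, v), hmem, by omega⟩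
  rw [sum_fibers, card_pairs] at hlt
  omega

lemma flip_unique {s t : ℕ} (hs : s < 435) (ht : t < 435)
    (heq : pairAt hp s = pairAt hp t) : s = t := by
  have hne := R_ne_L hp ht
  have h1 := fiber_card_one hp hne
  have hsm : s ∈ (Finset.range 435).filter (fun r => pairAt hp r = s(R hp t, L hp t)) :=
    Finset.mem_filter.mpr ⟨Finset.mem_range.mpr hs, heq.trans rfl⟩
  have htm : t ∈ (Finset.range 435).filter (fun r => pairAt hp r = s(R hp t, L hp t)) :=
    Finset.mem_filter.mpr ⟨Finset.mem_range.mpr ht, rfl⟩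
  exact Finset.card_le_one.mp (le_of_eq h1) s hsm t htm

lemma orient {t : ℕ} (h : t < 435) : hp.pos 0 (R hp t) < hp.pos 0 (L hp t) := by
  have hno : ∀ s, 0 ≤ s → s < t → pairAt hp s ≠ s(R hp t, L hp t) := by
    intro s _ hst hps
    have := flip_unique hp (by omega) h (hps.trans rfl)
    omega
  have h1 := ord_congr hp (R hp t) (L hp t) 0 t (by omega) (by omega) hno
  have h2 : hp.pos t (R hp t) < hp.pos t (L hp t) := by
    have := (spec hp h).1
    simp only [G] at this
    omega
  exact h1.mpr h2



lemma steps_eq : HalfPeriod.steps 30 = 435 := by norm_num [HalfPeriod.steps]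

lemma swapsAt_RL {t : ℕ} (h : t < 435) : hp.SwapsAt t (R hp t) (L hp t) :=
  ⟨R_ne_L hp h, (moved_iff hp h _).mpr (Or.inl rfl), (moved_iff hp h _).mpr (Or.inr rfl)⟩

lemma swapsAt_symm {t : ℕ} {u v : Fin 30} (h : hp.SwapsAt t u v) : hp.SwapsAt t v u :=
  ⟨h.1.symm, h.2.2, h.2.1⟩

lemma swapsAt_of_pair {t : ℕ} (h : t < 435) {u v : Fin 30}
    (hpq : pairAt hp t = s(u, v)) : hp.SwapsAt t u v := by
  rw [pairAt, Sym2.eq_iff] at hpq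
  rcases hpq with ⟨h1, h2⟩ | ⟨h1, h2⟩
  · rw [← h1, ← h2]; exact swapsAt_RL hp h
  · rw [← h1, ← h2]; exact swapsAt_symm hp (swapsAt_RL hp h)

lemma swapsAt_cases {t : ℕ} (h : t < 435) {u v : Fin 30} (hs : hp.SwapsAt t u v) :
    (u = R hp t ∧ v = L hp t) ∨ (u = L hp t ∧ v = R hp t) := by
  obtain ⟨hne, hu, hv⟩ := hs
  rcases (moved_iff hp h u).mp hu with h1 | h1 <;>
    rcases (moved_iff hp h v).mp hv with h2 | h2
  · exact absurd (h1.trans h2.symm) hne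
  · exact Or.inl ⟨h1, h2⟩
  · exact Or.inr ⟨h1, h2⟩
  · exact absurd (h1.trans h2.symm) hne

lemma pair_of_swapsAt {t : ℕ} (h : t < 435) {u v : Fin 30} (hs : hp.SwapsAt t u v) :
    pairAt hp t = s(u, v) := by
  rcases swapsAt_cases hp h hs with ⟨h1, h2⟩ | ⟨h1, h2⟩ <;>
    rw [pairAt, ← h1, ← h2]
  exact Sym2.eq_swap

section Labeled

variable {a b c : Fin 10 → Fin 30} (h3 : IsThreeDecompLabeling30 hp a b c)

include h3

lemma injA : Function.Injective a := fun i j h => by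
  have := h3.1 (show Sum.elim a (Sum.elim b c) (Sum.inl i)
    = Sum.elim a (Sum.elim b c) (Sum.inl j) by simpa using h)
  simpa using this

lemma injB : Function.Injective b := fun i j h => by
  have := h3.1 (show Sum.elim a (Sum.elim b c) (Sum.inr (Sum.inl i))
    = Sum.elim a (Sum.elim b c) (Sum.inr (Sum.inl j)) by simpa using h)
  simpa using this

lemma injC : Function.Injective c := fun i j h => by
  have := h3.1 (show Sum.elim a (Sum.elim b c) (Sum.inr (Sum.inr i))
    = Sum.elim a (Sum.elim b c) (Sum.inr (Sum.inr j)) by simpa using h)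
  simpa using this

lemma ab_ne (i j : Fin 10) : a i ≠ b j := fun h => by
  have := h3.1 (show Sum.elim a (Sum.elim b c) (Sum.inl i)
    = Sum.elim a (Sum.elim b c) (Sum.inr (Sum.inl j)) by simpa using h)
  simp at this

lemma ac_ne (i j : Fin 10) : a i ≠ c j := fun h => by
  have := h3.1 (show Sum.elim a (Sum.elim b c) (Sum.inl i)
    = Sum.elim a (Sum.elim b c) (Sum.inr (Sum.inr j)) by simpa using h)
  simp at this

lemma bc_ne (i j : Fin 10) : b i ≠ c j := fun h => by
  have := h3.1 (show Sum.elim a (Sum.elim b c) (Sum.inr (Sum.inl i))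
    = Sum.elim a (Sum.elim b c) (Sum.inr (Sum.inr j)) by simpa using h)
  simp at this

lemma classify (x : Fin 30) :
    ((∃ i, a i = x) ∧ ¬(∃ i, b i = x) ∧ ¬(∃ i, c i = x)) ∨
    (¬(∃ i, a i = x) ∧ (∃ i, b i = x) ∧ ¬(∃ i, c i = x)) ∨
    (¬(∃ i, a i = x) ∧ ¬(∃ i, b i = x) ∧ (∃ i, c i = x)) := by
  have hsurj : Function.Surjective (Sum.elim a (Sum.elim b c)) :=
    ((Fintype.bijective_iff_injective_and_card _).mpr ⟨h3.1, by simp⟩).2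
  obtain ⟨z, hz⟩ := hsurj x
  have hA : ∀ i j, a i = x → b j = x → False := fun i j h1 h2 => ab_ne hp h3 i j (h1.trans h2.symm)
  have hB : ∀ i j, a i = x → c j = x → False := fun i j h1 h2 => ac_ne hp h3 i j (h1.trans h2.symm)
  have hC : ∀ i j, b i = x → c j = x → False := fun i j h1 h2 => bc_ne hp h3 i j (h1.trans h2.symm)
  rcases z with i | i | i
  · exact Or.inl ⟨⟨i, hz⟩, fun ⟨j, hj⟩ => hA i j hz hj, fun ⟨j, hj⟩ => hB i j hz hj⟩
  · exact Or.inr (Or.inl ⟨fun ⟨j, hj⟩ => hA j i hj hz, ⟨i, hz⟩, fun ⟨j, hj⟩ => hC i j hz hj⟩)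
  · exact Or.inr (Or.inr ⟨fun ⟨j, hj⟩ => hB j i hj hz, fun ⟨j, hj⟩ => hC j i hj hz, ⟨i, hz⟩⟩)

end Labeled

lemma ten_below {t : ℕ} (h : t ≤ 435) {f : Fin 10 → Fin 30} (hfi : Function.Injective f)
    {q : ℕ} (hq : ∀ m, hp.pos t (f m) < q) : 11 ≤ q := by
  have himg : (Finset.univ.image (fun m => hp.pos t (f m))).card = 10 := by
    rw [show (fun m => hp.pos t (f m)) = hp.pos t ∘ f from rfl,
      Finset.card_image_of_injective _ ((pos_inj' hp h).comp hfi)]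
    simp
  have hsub : Finset.univ.image (fun m => hp.pos t (f m)) ⊆ Finset.Ico 1 q := by
    intro p hpm
    simp only [Finset.mem_image, Finset.mem_univ, true_and] at hpm
    obtain ⟨m, rfl⟩ := hpm
    exact Finset.mem_Ico.mpr ⟨(pos_bounds hp h (f m)).1, hq m⟩
  have := Finset.card_le_card hsub
  rw [Nat.card_Ico] at this
  omega

lemma ten_above {t : ℕ} (h : t ≤ 435) {f : Fin 10 → Fin 30} (hfi : Function.Injective f)
    {q : ℕ} (hq : ∀ m, q < hp.pos t (f m)) : q + 10 ≤ 30 := by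
  have himg : (Finset.univ.image (fun m => hp.pos t (f m))).card = 10 := by
    rw [show (fun m => hp.pos t (f m)) = hp.pos t ∘ f from rfl,
      Finset.card_image_of_injective _ ((pos_inj' hp h).comp hfi)]
    simp
  have hsub : Finset.univ.image (fun m => hp.pos t (f m)) ⊆ Finset.Icc (q+1) 30 := by
    intro p hpm
    simp only [Finset.mem_image, Finset.mem_univ, true_and] at hpm
    obtain ⟨m, rfl⟩ := hpm
    exact Finset.mem_Icc.mpr ⟨hq m, (pos_bounds hp h (f m)).2⟩
  have := Finset.card_le_card hsub
  rw [Nat.card_Icc] at this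
  omega

section Labeled2

variable {a b c : Fin 10 → Fin 30} (h3 : IsThreeDecompLabeling30 hp a b c)

include h3

lemma gate_AC_ge {t : ℕ} (ht : t < 435)
    (hiR : ∃ i, a i = R hp t) (hjL : ∃ j, c j = L hp t) : 11 ≤ G hp t := by
  obtain ⟨i, hi⟩ := hiR
  obtain ⟨j, hj⟩ := hjL
  have hsw : hp.SwapsAt t (a i) (c j) := by rw [hi, hj]; exact swapsAt_RL hp ht
  have hlt_b : ∀ m, hp.pos t (b m) < hp.pos t (a i) := by
    intro m
    have hno : ∀ s, t ≤ s → s < 435 → pairAt hp s ≠ s(b m, a i) := by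
      intro s hs1 hs2 hpair
      have hsw2 : hp.SwapsAt s (b m) (a i) := swapsAt_of_pair hp hs2 hpair
      have := h3.2.2.2.2.1 s t (by rw [steps_eq]; omega) (by rw [steps_eq]; omega)
        ⟨i, m, swapsAt_symm hp hsw2⟩ ⟨j, a i, Or.inl ⟨i, rfl⟩, swapsAt_symm hp hsw⟩
      omega
    have hiff := ord_congr hp (b m) (a i) t 435 (le_of_lt ht) le_rfl hno
    have hfin : hp.pos 435 (b m) < hp.pos 435 (a i) := by
      rw [posN, posN, h3.2.1 i, h3.2.2.1 m]
      have := i.isLt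
      have := m.isLt
      omega
    exact hiff.mpr hfin
  have h10 := ten_below hp (le_of_lt ht) (injB hp h3) hlt_b
  rw [G, ← hi]
  omega

lemma gate_AB_le {t : ℕ} (ht : t < 435)
    (hiR : ∃ i, a i = R hp t) (hjL : ∃ j, b j = L hp t) : G hp t ≤ 19 := by
  obtain ⟨i, hi⟩ := hiR
  obtain ⟨j, hj⟩ := hjL
  have hsw : hp.SwapsAt t (a i) (b j) := by rw [hi, hj]; exact swapsAt_RL hp ht
  have hgt_c : ∀ l, hp.pos t (b j) < hp.pos t (c l) := by
    intro l
    have hno : ∀ s, 0 ≤ s → s < t → pairAt hp s ≠ s(b j, c l) := by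
      intro s _ hst hpair
      have hsw2 : hp.SwapsAt s (b j) (c l) := swapsAt_of_pair hp (by omega) hpair
      have := h3.2.2.2.2.1 t s (by rw [steps_eq]; omega) (by rw [steps_eq]; omega)
        ⟨i, j, hsw⟩ ⟨l, b j, Or.inr ⟨j, rfl⟩, swapsAt_symm hp hsw2⟩
      omega
    have hiff := ord_congr hp (b j) (c l) 0 t (by omega) (le_of_lt (by omega)) hno
    have hini : hp.pos 0 (b j) < hp.pos 0 (c l) := by
      rw [h3.2.2.1 j, h3.2.2.2.1 l]
      omega
    exact hiff.mp hini
  have h20 := ten_above hp (le_of_lt ht) (injC hp h3) hgt_c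
  have hbj : hp.pos t (b j) = G hp t + 1 := by rw [hj]; exact (spec hp ht).1
  omega

end Labeled2

lemma gateAt_iff {t : ℕ} (ht : t < 435) (w : ℕ) : hp.GateAt t w ↔ G hp t = w := by
  constructor
  · rintro ⟨x, y, hx1, hy1, hx2, hy2⟩
    have hxm : hp.pos (t+1) x ≠ hp.pos t x := by omega
    rcases (moved_iff hp ht x).mp hxm with h1 | h1
    · rw [G, ← h1]; exact hx1
    · obtain ⟨hL1, _, hL3, _⟩ := spec hp ht
      rw [h1] at hx1 hx2
      omega
  · intro hg
    exact ⟨R hp t, L hp t, hg, by rw [(spec hp ht).1, hg], by rw [(spec hp ht).2.1, hg],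
      by rw [(spec hp ht).2.2.1, hg]⟩

lemma critical_iff {t : ℕ} (ht : t < 435) (k : ℕ) :
    hp.Critical t k ↔ (G hp t = k ∨ G hp t = 30 - k) := by
  rw [HalfPeriod.Critical, gateAt_iff hp ht, gateAt_iff hp ht]

lemma sameClass_symm {a b c : Fin 10 → Fin 30} {x y : Fin 30}
    (h : SameClass a b c x y) : SameClass a b c y x := by
  rcases h with ⟨i, j, h1, h2⟩ | ⟨i, j, h1, h2⟩ | ⟨i, j, h1, h2⟩
  · exact Or.inl ⟨j, i, h2, h1⟩
  · exact Or.inr (Or.inl ⟨j, i, h2, h1⟩)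
  · exact Or.inr (Or.inr ⟨j, i, h2, h1⟩)

lemma bichrom_iff {a b c : Fin 10 → Fin 30} {t : ℕ} (ht : t < 435) :
    (∃ x y, hp.SwapsAt t x y ∧ ¬ SameClass a b c x y) ↔
      ¬ SameClass a b c (R hp t) (L hp t) := by
  constructor
  · rintro ⟨x, y, hs, hns⟩
    rcases swapsAt_cases hp ht hs with ⟨rfl, rfl⟩ | ⟨rfl, rfl⟩
    · exact hns
    · exact fun hc => hns (sameClass_symm hc)
  · intro hns
    exact ⟨R hp t, L hp t, swapsAt_RL hp ht, hns⟩

noncomputable def ind (p : Prop) : ℤ := if p then 1 else 0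

lemma ind_congr {p q : Prop} (h : p ↔ q) : ind p = ind q := by simp [ind, h]

lemma ind_and_true {p q : Prop} (hq : q) : ind (p ∧ q) = ind p := by simp [ind, hq]

lemma ind_and_false {p q : Prop} (hq : ¬ q) : ind (p ∧ q) = 0 := by simp [ind, hq]

lemma ind_eq_zero {p : Prop} (hp : ¬ p) : ind p = 0 := by simp [ind, hp]

lemma ind_split {p q1 q2 q3 : Prop}
    (h : (q1 ∧ ¬q2 ∧ ¬q3) ∨ (¬q1 ∧ q2 ∧ ¬q3) ∨ (¬q1 ∧ ¬q2 ∧ q3)) :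
    ind p = ind (p ∧ q1) + ind (p ∧ q2) + ind (p ∧ q3) := by
  rcases h with ⟨h1, h2, h3⟩ | ⟨h1, h2, h3⟩ | ⟨h1, h2, h3⟩
  · rw [ind_and_true h1, ind_and_false h2, ind_and_false h3]; ring
  · rw [ind_and_false h1, ind_and_true h2, ind_and_false h3]; ring
  · rw [ind_and_false h1, ind_and_false h2, ind_and_true h3]; ring

lemma tele (x : Fin 30) (w : ℕ) :
    ∑ t ∈ Finset.range 435,
      (ind (G hp t = w ∧ x = R hp t) - ind (G hp t = w ∧ x = L hp t))
      = ind (hp.pos 0 x ≤ w) - ind (hp.pos 435 x ≤ w) := by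
  rw [← Finset.sum_range_sub' (fun t => ind (hp.pos t x ≤ w)) 435]
  apply Finset.sum_congr rfl
  intro t htm
  have ht := Finset.mem_range.mp htm
  rcases pos_cases hp ht x with ⟨hx, h1, h2⟩ | ⟨hx, h1, h2⟩ | ⟨h1, h2, h3⟩
  · have hxL : ¬ (x = L hp t) := by rw [hx]; exact R_ne_L hp ht
    simp only [h1, h2]
    rw [ind_and_true hx, ind_and_false hxL]
    unfold ind
    split_ifs <;> omega
  · have hxR : ¬ (x = R hp t) := by
      rw [hx]; exact fun hc => R_ne_L hp ht hc.symm
    simp only [h1, h2]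
    rw [ind_and_true hx, ind_and_false hxR]
    unfold ind
    split_ifs <;> omega
  · have hxR : ¬ (x = R hp t) := fun hc => h2 (by rw [hc]; rfl)
    have hxL : ¬ (x = L hp t) := fun hc => h3 (by rw [hc]; exact (spec hp ht).1)
    simp only [h1]
    rw [ind_and_false hxR, ind_and_false hxL]
    ring

lemma sum_ind_exists {f : Fin 10 → Fin 30} (hfi : Function.Injective f)
    (P : Prop) (y : Fin 30) :
    ∑ i : Fin 10, ind (P ∧ f i = y) = ind (P ∧ ∃ i, f i = y) := by
  by_cases hE : ∃ i, f i = y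
  · obtain ⟨i0, hi0⟩ := hE
    rw [ind_and_true ⟨i0, hi0⟩, Finset.sum_eq_single i0]
    · rw [ind_and_true hi0]
    · intro j _ hj
      exact ind_and_false (fun hc => hj (hfi (hc.trans hi0.symm)))
    · simp
  · rw [ind_and_false hE, Finset.sum_eq_zero]
    intro i _
    exact ind_and_false (fun hc => hE ⟨i, hc⟩)

lemma class_flow {f : Fin 10 → Fin 30} (hfi : Function.Injective f) (w : ℕ) :
    ∑ t ∈ Finset.range 435,
      (ind (G hp t = w ∧ ∃ i, f i = R hp t) - ind (G hp t = w ∧ ∃ i, f i = L hp t))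
      = ∑ i : Fin 10, (ind (hp.pos 0 (f i) ≤ w) - ind (hp.pos 435 (f i) ≤ w)) := by
  calc ∑ t ∈ Finset.range 435,
      (ind (G hp t = w ∧ ∃ i, f i = R hp t) - ind (G hp t = w ∧ ∃ i, f i = L hp t))
      = ∑ t ∈ Finset.range 435, ∑ i : Fin 10,
        (ind (G hp t = w ∧ f i = R hp t) - ind (G hp t = w ∧ f i = L hp t)) := by
        apply Finset.sum_congr rfl
        intro t _
        rw [Finset.sum_sub_distrib, sum_ind_exists hfi, sum_ind_exists hfi]
    _ = ∑ i : Fin 10, ∑ t ∈ Finset.range 435,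
        (ind (G hp t = w ∧ f i = R hp t) - ind (G hp t = w ∧ f i = L hp t)) :=
        Finset.sum_comm
    _ = _ := Finset.sum_congr rfl (fun i _ => tele hp (f i) w)

noncomputable def NXY (hp : HalfPeriod 30) (X Y : Fin 30 → Prop) (w : ℕ) : ℤ :=
  ∑ t ∈ Finset.range 435, ind (G hp t = w ∧ X (R hp t) ∧ Y (L hp t))

section Labeled3

variable {a b c : Fin 10 → Fin 30} (h3 : IsThreeDecompLabeling30 hp a b c)

include h3

lemma expandR (X : Fin 30 → Prop) (w : ℕ) :
    ∑ t ∈ Finset.range 435, ind (G hp t = w ∧ X (R hp t))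
      = NXY hp X (fun x => ∃ i, a i = x) w + NXY hp X (fun x => ∃ i, b i = x) w
        + NXY hp X (fun x => ∃ i, c i = x) w := by
  unfold NXY
  rw [← Finset.sum_add_distrib, ← Finset.sum_add_distrib]
  apply Finset.sum_congr rfl
  intro t _
  have h := ind_split (p := G hp t = w ∧ X (R hp t)) (classify hp h3 (L hp t))
  rw [h]
  congr 1
  · congr 1
    · exact ind_congr (by tauto)
    · exact ind_congr (by tauto)
  · exact ind_congr (by tauto)

lemma expandL (Y : Fin 30 → Prop) (w : ℕ) :
    ∑ t ∈ Finset.range 435, ind (G hp t = w ∧ Y (L hp t))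
      = NXY hp (fun x => ∃ i, a i = x) Y w + NXY hp (fun x => ∃ i, b i = x) Y w
        + NXY hp (fun x => ∃ i, c i = x) Y w := by
  unfold NXY
  rw [← Finset.sum_add_distrib, ← Finset.sum_add_distrib]
  apply Finset.sum_congr rfl
  intro t _
  have h := ind_split (p := G hp t = w ∧ Y (L hp t)) (classify hp h3 (R hp t))
  rw [h]
  congr 1
  · congr 1
    · exact ind_congr (by tauto)
    · exact ind_congr (by tauto)
  · exact ind_congr (by tauto)

omit h3 in
lemma flow_eq {f : Fin 10 → Fin 30} (hfi : Function.Injective f) (w : ℕ) :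
    ∑ t ∈ Finset.range 435, ind (G hp t = w ∧ ∃ i, f i = R hp t)
      - ∑ t ∈ Finset.range 435, ind (G hp t = w ∧ ∃ i, f i = L hp t)
      = ∑ i : Fin 10, (ind (hp.pos 0 (f i) ≤ w) - ind (hp.pos 435 (f i) ≤ w)) := by
  rw [← Finset.sum_sub_distrib]
  exact class_flow hp hfi w

-- orientation zeros
lemma NXY_BA (w : ℕ) :
    NXY hp (fun x => ∃ i, b i = x) (fun x => ∃ i, a i = x) w = 0 := by
  apply Finset.sum_eq_zero
  intro t htm
  have ht := Finset.mem_range.mp htm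
  apply ind_eq_zero
  rintro ⟨hg, ⟨j, hbj⟩, ⟨i, hai⟩⟩
  have ho := orient hp ht
  rw [← hbj, ← hai, h3.2.2.1 j, h3.2.1 i] at ho
  have := i.isLt
  omega

lemma NXY_CA (w : ℕ) :
    NXY hp (fun x => ∃ i, c i = x) (fun x => ∃ i, a i = x) w = 0 := by
  apply Finset.sum_eq_zero
  intro t htm
  have ht := Finset.mem_range.mp htm
  apply ind_eq_zero
  rintro ⟨hg, ⟨j, hcj⟩, ⟨i, hai⟩⟩
  have ho := orient hp ht
  rw [← hcj, ← hai, h3.2.2.2.1 j, h3.2.1 i] at ho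
  have := i.isLt
  omega

lemma NXY_CB (w : ℕ) :
    NXY hp (fun x => ∃ i, c i = x) (fun x => ∃ i, b i = x) w = 0 := by
  apply Finset.sum_eq_zero
  intro t htm
  have ht := Finset.mem_range.mp htm
  apply ind_eq_zero
  rintro ⟨hg, ⟨j, hcj⟩, ⟨i, hbi⟩⟩
  have ho := orient hp ht
  rw [← hcj, ← hbi, h3.2.2.2.1 j, h3.2.2.1 i] at ho
  have := j.isLt
  omega

-- gate zeros
lemma NXY_AC_low {k : ℕ} (hk : k ≤ 10) :
    NXY hp (fun x => ∃ i, a i = x) (fun x => ∃ i, c i = x) k = 0 := by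
  apply Finset.sum_eq_zero
  intro t htm
  have ht := Finset.mem_range.mp htm
  apply ind_eq_zero
  rintro ⟨hg, hA, hC⟩
  have := gate_AC_ge hp h3 ht hA hC
  omega

lemma NXY_AB_high {w : ℕ} (hw : 20 ≤ w) :
    NXY hp (fun x => ∃ i, a i = x) (fun x => ∃ i, b i = x) w = 0 := by
  apply Finset.sum_eq_zero
  intro t htm
  have ht := Finset.mem_range.mp htm
  apply ind_eq_zero
  rintro ⟨hg, hA, hB⟩
  have := gate_AB_le hp h3 ht hA hB
  omega

-- net values
lemma netA_low {k : ℕ} (hk1 : 1 ≤ k) (hk : k ≤ 10) :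
    ∑ i : Fin 10, (ind (hp.pos 0 (a i) ≤ k) - ind (hp.pos 435 (a i) ≤ k)) = k := by
  have hrw : ∀ i : Fin 10,
      ind (hp.pos 0 (a i) ≤ k) - ind (hp.pos 435 (a i) ≤ k)
        = ind (10 - (i : ℕ) ≤ k) := by
    intro i
    rw [posN, h3.2.1 i]
    have hi := i.isLt
    rw [ind_eq_zero (p := 31 - (10 - (i:ℕ)) ≤ k) (by omega)]
    ring
  rw [Finset.sum_congr rfl (fun i _ => hrw i)]
  rw [Fin.sum_univ_eq_sum_range (fun j => ind (10 - j ≤ k)) 10]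
  interval_cases k <;> norm_num [ind, Finset.sum_range_succ] <;> decide

lemma netB_low {k : ℕ} (hk : k ≤ 10) :
    ∑ i : Fin 10, (ind (hp.pos 0 (b i) ≤ k) - ind (hp.pos 435 (b i) ≤ k)) = 0 := by
  apply Finset.sum_eq_zero
  intro i _
  have hi := i.isLt
  rw [posN, h3.2.2.1 i, ind_eq_zero (by omega), ind_eq_zero (by omega)]
  ring

lemma netA_high {k : ℕ} (hk1 : 1 ≤ k) (hk : k ≤ 10) :
    ∑ i : Fin 10, (ind (hp.pos 0 (a i) ≤ 30 - k) - ind (hp.pos 435 (a i) ≤ 30 - k)) = k := by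
  have hrw : ∀ i : Fin 10,
      ind (hp.pos 0 (a i) ≤ 30 - k) - ind (hp.pos 435 (a i) ≤ 30 - k)
        = 1 - ind (31 - (10 - (i : ℕ)) ≤ 30 - k) := by
    intro i
    rw [posN, h3.2.1 i]
    have hi := i.isLt
    rw [ind_congr (p := 10 - (i:ℕ) ≤ 30 - k) (q := True) (by constructor <;> intro <;> first | trivial | omega)]
    simp [ind]
  rw [Finset.sum_congr rfl (fun i _ => hrw i)]
  rw [Fin.sum_univ_eq_sum_range (fun j => (1 - ind (31 - (10 - j) ≤ 30 - k))) 10]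
  interval_cases k <;> norm_num [ind, Finset.sum_range_succ] <;> decide

lemma netB_high {k : ℕ} (hk : k ≤ 10) :
    ∑ i : Fin 10, (ind (hp.pos 0 (b i) ≤ 30 - k) - ind (hp.pos 435 (b i) ≤ 30 - k)) = 0 := by
  apply Finset.sum_eq_zero
  intro i _
  have hi := i.isLt
  rw [posN, h3.2.2.1 i,
    ind_congr (q := True) (by constructor <;> intro <;> first | trivial | omega),
    ind_congr (p := 31 - (11 + (i:ℕ)) ≤ 30 - k) (q := True)
      (by constructor <;> intro <;> first | trivial | omega)]
  ring

end Labeled3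

lemma ind_or {p q r : Prop} (h : ¬(p ∧ q)) :
    ind ((p ∨ q) ∧ r) = ind (p ∧ r) + ind (q ∧ r) := by
  by_cases hp' : p <;> by_cases hq : q <;> by_cases hr : r <;>
    simp [ind, hp', hq, hr] <;> tauto

lemma card_filter_ind (s : Finset ℕ) (p : ℕ → Prop) [DecidablePred p] :
    (((s.filter p).card : ℤ)) = ∑ t ∈ s, ind (p t) := by
  rw [Finset.card_filter, Nat.cast_sum]
  apply Finset.sum_congr rfl
  intro t _
  by_cases h : p t <;> simp [ind, h]

section Labeled4

variable {a b c : Fin 10 → Fin 30} (h3 : IsThreeDecompLabeling30 hp a b c)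

include h3

lemma ind_bi_split (w : ℕ) (t : ℕ) :
    ind (G hp t = w ∧ ¬ SameClass a b c (R hp t) (L hp t)) =
      ind (G hp t = w ∧ (∃ i, a i = R hp t) ∧ (∃ i, b i = L hp t))
    + ind (G hp t = w ∧ (∃ i, a i = R hp t) ∧ (∃ i, c i = L hp t))
    + ind (G hp t = w ∧ (∃ i, b i = R hp t) ∧ (∃ i, a i = L hp t))
    + ind (G hp t = w ∧ (∃ i, b i = R hp t) ∧ (∃ i, c i = L hp t))
    + ind (G hp t = w ∧ (∃ i, c i = R hp t) ∧ (∃ i, a i = L hp t))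
    + ind (G hp t = w ∧ (∃ i, c i = R hp t) ∧ (∃ i, b i = L hp t)) := by
  rcases classify hp h3 (R hp t) with ⟨hA, hB, hC⟩ | ⟨hA, hB, hC⟩ | ⟨hA, hB, hC⟩ <;>
    rcases classify hp h3 (L hp t) with ⟨hA', hB', hC'⟩ | ⟨hA', hB', hC'⟩ | ⟨hA', hB', hC'⟩ <;>
    first
      | (have hS : SameClass a b c (R hp t) (L hp t) := by
           first
             | exact Or.inl ⟨hA.choose, hA'.choose, hA.choose_spec.symm, hA'.choose_spec.symm⟩
             | exact Or.inr (Or.inl ⟨hB.choose, hB'.choose, hB.choose_spec.symm, hB'.choose_spec.symm⟩)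
             | exact Or.inr (Or.inr ⟨hC.choose, hC'.choose, hC.choose_spec.symm, hC'.choose_spec.symm⟩)
         simp [ind, hS, hA, hB, hC, hA', hB', hC'])
      | (have hNS : ¬ SameClass a b c (R hp t) (L hp t) := by
           rintro (⟨i, j, h1, h2⟩ | ⟨i, j, h1, h2⟩ | ⟨i, j, h1, h2⟩) <;>
             first
               | exact hA ⟨i, h1.symm⟩
               | exact hB ⟨i, h1.symm⟩
               | exact hC ⟨i, h1.symm⟩
               | exact hA' ⟨j, h2.symm⟩
               | exact hB' ⟨j, h2.symm⟩
               | exact hC' ⟨j, h2.symm⟩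
         simp [ind, hNS, hA, hB, hC, hA', hB', hC'])

lemma total_count {k : ℕ} (hk1 : 1 ≤ k) (hk10 : k ≤ 10) :
    ∑ t ∈ Finset.range 435,
      ind ((G hp t = k ∨ G hp t = 30 - k) ∧
        ¬ SameClass a b c (R hp t) (L hp t)) = 3 * k := by
  have hsplit : ∀ t ∈ Finset.range 435,
      ind ((G hp t = k ∨ G hp t = 30 - k) ∧ ¬ SameClass a b c (R hp t) (L hp t))
        = ind (G hp t = k ∧ ¬ SameClass a b c (R hp t) (L hp t))
          + ind (G hp t = 30 - k ∧ ¬ SameClass a b c (R hp t) (L hp t)) := by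
    intro t _
    exact ind_or (by omega)
  rw [Finset.sum_congr rfl hsplit, Finset.sum_add_distrib,
    Finset.sum_congr rfl (fun t _ => ind_bi_split hp h3 k t),
    Finset.sum_congr rfl (fun t _ => ind_bi_split hp h3 (30 - k) t)]
  simp only [Finset.sum_add_distrib]
  -- name the twelve sums as NXY
  have cAB : ∀ w, (∑ t ∈ Finset.range 435,
      ind (G hp t = w ∧ (∃ i, a i = R hp t) ∧ (∃ i, b i = L hp t)))
      = NXY hp (fun x => ∃ i, a i = x) (fun x => ∃ i, b i = x) w := fun w => rfl
  have cAC : ∀ w, (∑ t ∈ Finset.range 435,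
      ind (G hp t = w ∧ (∃ i, a i = R hp t) ∧ (∃ i, c i = L hp t)))
      = NXY hp (fun x => ∃ i, a i = x) (fun x => ∃ i, c i = x) w := fun w => rfl
  have cBA : ∀ w, (∑ t ∈ Finset.range 435,
      ind (G hp t = w ∧ (∃ i, b i = R hp t) ∧ (∃ i, a i = L hp t)))
      = NXY hp (fun x => ∃ i, b i = x) (fun x => ∃ i, a i = x) w := fun w => rfl
  have cBC : ∀ w, (∑ t ∈ Finset.range 435,
      ind (G hp t = w ∧ (∃ i, b i = R hp t) ∧ (∃ i, c i = L hp t)))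
      = NXY hp (fun x => ∃ i, b i = x) (fun x => ∃ i, c i = x) w := fun w => rfl
  have cCA : ∀ w, (∑ t ∈ Finset.range 435,
      ind (G hp t = w ∧ (∃ i, c i = R hp t) ∧ (∃ i, a i = L hp t)))
      = NXY hp (fun x => ∃ i, c i = x) (fun x => ∃ i, a i = x) w := fun w => rfl
  have cCB : ∀ w, (∑ t ∈ Finset.range 435,
      ind (G hp t = w ∧ (∃ i, c i = R hp t) ∧ (∃ i, b i = L hp t)))
      = NXY hp (fun x => ∃ i, c i = x) (fun x => ∃ i, b i = x) w := fun w => rfl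
  rw [cAB k, cAC k, cBA k, cBC k, cCA k, cCB k,
    cAB (30 - k), cAC (30 - k), cBA (30 - k), cBC (30 - k), cCA (30 - k), cCB (30 - k)]
  -- flow equations
  have hAlow := flow_eq hp (f := a) (injA hp h3) k
  rw [expandR hp h3 (fun x => ∃ i, a i = x) k, expandL hp h3 (fun x => ∃ i, a i = x) k,
    netA_low hp h3 hk1 hk10] at hAlow
  have hBlow := flow_eq hp (f := b) (injB hp h3) k
  rw [expandR hp h3 (fun x => ∃ i, b i = x) k, expandL hp h3 (fun x => ∃ i, b i = x) k,
    netB_low hp h3 hk10] at hBlow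
  have hAhigh := flow_eq hp (f := a) (injA hp h3) (30 - k)
  rw [expandR hp h3 (fun x => ∃ i, a i = x) (30 - k),
    expandL hp h3 (fun x => ∃ i, a i = x) (30 - k),
    netA_high hp h3 hk1 hk10] at hAhigh
  have hBhigh := flow_eq hp (f := b) (injB hp h3) (30 - k)
  rw [expandR hp h3 (fun x => ∃ i, b i = x) (30 - k),
    expandL hp h3 (fun x => ∃ i, b i = x) (30 - k),
    netB_high hp h3 hk10] at hBhigh
  have z1 := NXY_BA hp h3 k
  have z2 := NXY_CA hp h3 k
  have z3 := NXY_CB hp h3 k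
  have z4 := NXY_BA hp h3 (30 - k)
  have z5 := NXY_CA hp h3 (30 - k)
  have z6 := NXY_CB hp h3 (30 - k)
  have z7 := NXY_AC_low hp h3 hk10
  have z8 := NXY_AB_high hp h3 (w := 30 - k) (by omega)
  omega

end Labeled4

end BCL
/-- If `Π` is a 3-decomposable 30-half-period, then
`N_k^{bi}(Π) = 3k` for every `k = 1, 2, …, 10`. -/
theorem bichromatic_count_low (hp : HalfPeriod 30) (a b c : Fin 10 → Fin 30)
    (h3 : IsThreeDecompLabeling30 hp a b c) :
    ∀ k : ℕ, 1 ≤ k → k ≤ 10 → NkBi hp a b c k = 3 * k := by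
  classical
  intro k hk1 hk10
  have hset : {t : ℕ | t < HalfPeriod.steps 30 ∧ hp.Critical t k ∧
      ∃ x y, hp.SwapsAt t x y ∧ ¬ SameClass a b c x y} =
      ↑((Finset.range 435).filter (fun t => (BCL.G hp t = k ∨ BCL.G hp t = 30 - k) ∧
        ¬ SameClass a b c (BCL.R hp t) (BCL.L hp t))) := by
    ext t
    simp only [Set.mem_setOf_eq, Finset.coe_filter, Finset.mem_range, BCL.steps_eq,
      Set.mem_setOf_eq]
    constructor
    · rintro ⟨ht, hcrit, hbi⟩
      exact ⟨ht, (BCL.critical_iff hp ht k).mp hcrit, (BCL.bichrom_iff hp ht).mp hbi⟩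
    · rintro ⟨ht, hcrit, hbi⟩
      exact ⟨ht, (BCL.critical_iff hp ht k).mpr hcrit, (BCL.bichrom_iff hp ht).mpr hbi⟩
  unfold NkBi
  rw [hset, Set.ncard_coe_finset]
  have hZ : ((((Finset.range 435).filter (fun t => (BCL.G hp t = k ∨ BCL.G hp t = 30 - k) ∧
      ¬ SameClass a b c (BCL.R hp t) (BCL.L hp t))).card : ℤ)) = 3 * k := by
    rw [BCL.card_filter_ind]
    exact BCL.total_count hp h3 hk1 hk10
  exact_mod_cast hZ
end

section
/- Let Π be a 3-decomposable 30-half-period. Then N_k^{bi}(Π) = 30 for every k = 11, 12, 13, 14. -/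
namespace ThreeDecompAux

open Finset

lemma hS : 30 * (30 - 1) / 2 = 435 := by norm_num

lemma steps_eq : HalfPeriod.steps 30 = 435 := by norm_num [HalfPeriod.steps]

variable (hp : HalfPeriod 30)

/-- The pair swapped at step `t` (left element first). -/
noncomputable def swp (t : ℕ) : Fin 30 × Fin 30 :=
  if h : t < 30 * (30 - 1) / 2 then
    ⟨(hp.step t h).choose, (hp.step t h).choose_spec.choose⟩
  else (0, 0)

noncomputable def XX (t : ℕ) : Fin 30 := (swp hp t).1
noncomputable def YY (t : ℕ) : Fin 30 := (swp hp t).2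

/-- the gate (position of the left element) of step `t`. -/
noncomputable def gate (t : ℕ) : ℕ := hp.pos t (XX hp t)

lemma swp_spec {t : ℕ} (ht : t < 435) :
    hp.pos t (YY hp t) = hp.pos t (XX hp t) + 1 ∧
    hp.pos (t + 1) (XX hp t) = hp.pos t (XX hp t) + 1 ∧
    hp.pos (t + 1) (YY hp t) = hp.pos t (XX hp t) ∧
    ∀ z, z ≠ XX hp t → z ≠ YY hp t → hp.pos (t + 1) z = hp.pos t z := by
  have h : t < 30 * (30 - 1) / 2 := by rw [hS]; exact ht
  have hs := (hp.step t h).choose_spec.choose_spec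
  simp only [XX, YY, swp, dif_pos h]
  exact hs

lemma posb {t : ℕ} (ht : t ≤ 435) (x : Fin 30) :
    1 ≤ hp.pos t x ∧ hp.pos t x ≤ 30 :=
  hp.pos_mem t (by rw [hS]; exact ht) x

lemma pos_ne {t : ℕ} (ht : t ≤ 435) {u v : Fin 30} (h : u ≠ v) :
    hp.pos t u ≠ hp.pos t v :=
  fun he => h (hp.pos_inj t (by rw [hS]; exact ht) he)

lemma pos_rev (x : Fin 30) : hp.pos 435 x = 30 + 1 - hp.pos 0 x := by
  have := hp.reverse x
  rwa [hS] at this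

lemma XY_ne {t : ℕ} (ht : t < 435) : XX hp t ≠ YY hp t := by
  intro h
  have h1 := (swp_spec hp ht).1
  rw [h] at h1
  omega

lemma moved_cases {t : ℕ} (ht : t < 435) {z : Fin 30} (h : hp.Moved t z) :
    z = XX hp t ∨ z = YY hp t := by
  by_contra hc
  push_neg at hc
  exact h ((swp_spec hp ht).2.2.2 z hc.1 hc.2)

/-- `t` is a step at which `u` and `v` (in some order) are transposed. -/
def crossCond (u v : Fin 30) (t : ℕ) : Prop :=
  swp hp t = (u, v) ∨ swp hp t = (v, u)

noncomputable instance (u v : Fin 30) : DecidablePred (crossCond hp u v) := fun t =>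
  inferInstanceAs (Decidable (_ ∨ _))

/-- The set of steps at which `u` and `v` are transposed. -/
noncomputable def CTf (u v : Fin 30) : Finset ℕ :=
  (range 435).filter (crossCond hp u v)

lemma ord_step_ne {t : ℕ} (ht : t < 435) {u v : Fin 30} (huv : u ≠ v)
    (h : ¬ crossCond hp u v t) :
    (hp.pos (t + 1) u < hp.pos (t + 1) v ↔ hp.pos t u < hp.pos t v) := by
  obtain ⟨h1, h2, h3, h4⟩ := swp_spec hp ht
  rw [crossCond, Prod.ext_iff, Prod.ext_iff] at h
  push_neg at h
  simp only [XX, YY] at *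
  by_cases hux : u = (swp hp t).1
  · have hvy : v ≠ (swp hp t).2 := by
      intro hv; exact (h.1 (by rw [hux]) (by rw [hv])).elim
    have hvx : v ≠ (swp hp t).1 := fun hv => huv (hux.trans hv.symm)
    rw [hux, h2, h4 v hvx hvy]
    have e1 : hp.pos t v ≠ hp.pos t (swp hp t).1 := pos_ne hp (le_of_lt ht) hvx
    have e2 : hp.pos t v ≠ hp.pos t (swp hp t).2 := pos_ne hp (le_of_lt ht) hvy
    rw [h1] at e2
    omega
  · by_cases huy : u = (swp hp t).2
    · have hvx : v ≠ (swp hp t).1 := by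
        intro hv; exact (h.2 hv.symm huy.symm).elim
      have hvy : v ≠ (swp hp t).2 := fun hv => huv (huy.trans hv.symm)
      rw [huy, h3, h4 v hvx hvy, h1]
      have e1 : hp.pos t v ≠ hp.pos t (swp hp t).1 := pos_ne hp (le_of_lt ht) hvx
      have e2 : hp.pos t v ≠ hp.pos t (swp hp t).2 := pos_ne hp (le_of_lt ht) hvy
      rw [h1] at e2
      omega
    · rw [h4 u hux huy]
      by_cases hvx : v = (swp hp t).1
      · rw [hvx, h2]
        have e1 : hp.pos t u ≠ hp.pos t (swp hp t).1 := pos_ne hp (le_of_lt ht) hux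
        have e2 : hp.pos t u ≠ hp.pos t (swp hp t).2 := pos_ne hp (le_of_lt ht) huy
        rw [h1] at e2
        rw [hvx] at *
        omega
      · by_cases hvy : v = (swp hp t).2
        · rw [hvy, h3]
          have e1 : hp.pos t u ≠ hp.pos t (swp hp t).1 := pos_ne hp (le_of_lt ht) hux
          have e2 : hp.pos t u ≠ hp.pos t (swp hp t).2 := pos_ne hp (le_of_lt ht) huy
          rw [h1] at e2
          rw [hvy] at *
          rw [h1]
          omega
        · rw [h4 v hvx hvy]

lemma ord_step_cross {t : ℕ} (ht : t < 435) {u v : Fin 30} (huv : u ≠ v)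
    (h : crossCond hp u v t) :
    (hp.pos (t + 1) u < hp.pos (t + 1) v ↔ ¬ (hp.pos t u < hp.pos t v)) := by
  obtain ⟨h1, h2, h3, h4⟩ := swp_spec hp ht
  rcases h with h | h
  · have hx : XX hp t = u := by rw [XX, h]
    have hy : YY hp t = v := by rw [YY, h]
    simp only [hx, hy] at h1 h2 h3
    rw [h1, h2, h3]
    omega
  · have hx : XX hp t = v := by rw [XX, h]
    have hy : YY hp t = u := by rw [YY, h]
    simp only [hx, hy] at h1 h2 h3
    rw [h1, h2, h3]
    omega

lemma ord_iff {u v : Fin 30} (huv : u ≠ v) :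
    ∀ m, m ≤ 435 → (hp.pos m u < hp.pos m v ↔
      ((hp.pos 0 u < hp.pos 0 v) ↔
        Even (((range m).filter (crossCond hp u v)).card)) ) := by
  intro m
  induction m with
  | zero => intro _; simp
  | succ m ih =>
    intro hm
    have hm' : m ≤ 435 := by omega
    have hmlt : m < 435 := by omega
    have ihm := ih hm'
    have hnotmem : m ∉ range m := by simp
    rw [Finset.range_add_one, Finset.filter_insert]
    by_cases hc : crossCond hp u v m
    · rw [if_pos hc, Finset.card_insert_of_notMem (fun hmem => hnotmem (mem_of_mem_filter m hmem))]
      rw [ord_step_cross hp hmlt huv hc, ihm, Nat.even_add_one]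
      tauto
    · rw [if_neg hc, ord_step_ne hp hmlt huv hc, ihm]

lemma cross_card_odd {u v : Fin 30} (huv : u ≠ v) :
    ¬ Even (CTf hp u v).card := by
  have h := ord_iff hp huv 435 le_rfl
  have hrevu := pos_rev hp u
  have hrevv := pos_rev hp v
  have hb0u := posb hp (by omega : (0:ℕ) ≤ 435) u
  have hb0v := posb hp (by omega : (0:ℕ) ≤ 435) v
  have hne0 : hp.pos 0 u ≠ hp.pos 0 v := pos_ne hp (by omega) huv
  rw [CTf] at *
  intro heven
  rw [hrevu, hrevv] at h
  rcases lt_or_gt_of_ne hne0 with h0 | h0 <;> simp [heven] at h <;> omega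

lemma cross_total :
    ∑ p ∈ (univ : Finset (Fin 30)).offDiag, (CTf hp p.1 p.2).card = 870 := by
  have h1 : ∀ p ∈ (univ : Finset (Fin 30)).offDiag,
      (CTf hp p.1 p.2).card = ∑ t ∈ range 435, if crossCond hp p.1 p.2 t then 1 else 0 := by
    intro p _
    rw [CTf, Finset.sum_boole, Nat.cast_id]
  rw [Finset.sum_congr rfl h1, Finset.sum_comm]
  have h2 : ∀ t ∈ range 435,
      (∑ p ∈ (univ : Finset (Fin 30)).offDiag, if crossCond hp p.1 p.2 t then 1 else 0) = 2 := by
    intro t ht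
    rw [mem_range] at ht
    rw [Finset.sum_boole, Nat.cast_id]
    have hXY := XY_ne hp ht
    have hset : (univ : Finset (Fin 30)).offDiag.filter (fun p => crossCond hp p.1 p.2 t)
        = {(XX hp t, YY hp t), (YY hp t, XX hp t)} := by
      ext p
      simp only [mem_filter, Finset.mem_offDiag, mem_univ, true_and, mem_insert,
        Finset.mem_singleton]
      constructor
      · rintro ⟨hne, hc | hc⟩
        · left; simp [XX, YY, hc]
        · right; simp [XX, YY, hc]
      · rintro (rfl | rfl)
        · exact ⟨hXY, Or.inl (by simp [XX, YY])⟩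
        · exact ⟨hXY.symm, Or.inr (by simp [XX, YY])⟩
    rw [hset]
    rw [Finset.card_insert_of_notMem (by simp [Prod.ext_iff]; intro h; exact (hXY h).elim),
      Finset.card_singleton]
  rw [Finset.sum_congr rfl h2]
  simp

lemma cross_card_one {u v : Fin 30} (huv : u ≠ v) : (CTf hp u v).card = 1 := by
  by_contra hne
  have hodd := cross_card_odd hp huv
  have h1 : 1 ≤ (CTf hp u v).card := by
    rcases Nat.eq_zero_or_pos (CTf hp u v).card with h | h
    · rw [h] at hodd; simp at hodd
    · omega
  have h2 : 2 ≤ (CTf hp u v).card := by omega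
  have hmem : (u, v) ∈ (univ : Finset (Fin 30)).offDiag := by
    simp [Finset.mem_offDiag, huv]
  have hlt : ∑ p ∈ (univ : Finset (Fin 30)).offDiag, 1 <
      ∑ p ∈ (univ : Finset (Fin 30)).offDiag, (CTf hp p.1 p.2).card := by
    apply Finset.sum_lt_sum
    · intro p hp'
      rw [Finset.mem_offDiag] at hp'
      have := cross_card_odd hp hp'.2.2
      rcases Nat.eq_zero_or_pos (CTf hp p.1 p.2).card with h | h
      · rw [h] at this; simp at this
      · omega
    · exact ⟨(u, v), hmem, by simpa using (show 1 < (CTf hp u v).card by omega)⟩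
  rw [cross_total] at hlt
  have : (870:ℕ) < 870 := by simpa [Finset.offDiag_card] using hlt
  omega

end ThreeDecompAux
namespace ThreeDecompAux

open Finset

variable (hp : HalfPeriod 30)

lemma ord_of_no_cross {u v : Fin 30} (huv : u ≠ v) {m : ℕ} (hm : m ≤ 435)
    (h : ∀ s ∈ CTf hp u v, m ≤ s) (h0 : hp.pos 0 u < hp.pos 0 v) :
    hp.pos m u < hp.pos m v := by
  have hiff := ord_iff hp huv m hm
  have hempty : (range m).filter (crossCond hp u v) = ∅ := by
    rw [Finset.filter_eq_empty_iff]
    intro t htm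
    rw [mem_range] at htm
    intro hc
    have : t ∈ CTf hp u v := by
      rw [CTf, mem_filter, mem_range]
      exact ⟨by omega, hc⟩
    have := h t this
    omega
  rw [hempty] at hiff
  simp only [card_empty, Nat.even_iff] at hiff
  rw [hiff]
  simp [h0]

lemma ord_of_crossed {u v : Fin 30} (huv : u ≠ v) {m s : ℕ} (hm : m ≤ 435)
    (hs : s ∈ CTf hp u v) (hsm : s < m) (h0 : hp.pos 0 u < hp.pos 0 v) :
    hp.pos m v < hp.pos m u := by
  have hiff := ord_iff hp huv m hm
  obtain ⟨s', hs'⟩ := Finset.card_eq_one.1 (cross_card_one hp huv)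
  have hss : s = s' := by
    have := hs
    rw [hs', Finset.mem_singleton] at this
    exact this
  subst hss
  have hone : (range m).filter (crossCond hp u v) = {s} := by
    ext t
    rw [mem_filter, mem_range]
    constructor
    · rintro ⟨htm, hc⟩
      have : t ∈ CTf hp u v := by
        rw [CTf, mem_filter, mem_range]
        exact ⟨by omega, hc⟩
      rwa [hs'] at this
    · intro ht
      rw [Finset.mem_singleton] at ht
      subst ht
      have := hs
      rw [CTf, mem_filter] at this
      exact ⟨hsm, this.2⟩
  rw [hone] at hiff
  simp only [Finset.card_singleton] at hiff
  have hodd : ¬ Even 1 := by decide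
  have hne : hp.pos m u ≠ hp.pos m v := pos_ne hp hm huv
  simp only [hodd, iff_false, not_lt] at hiff
  -- hiff : pos m u < pos m v ↔ ¬ pos 0 u < pos 0 v
  omega

lemma swp_of_cross {u v : Fin 30} {s : ℕ} (h0 : hp.pos 0 u < hp.pos 0 v)
    (hs : s ∈ CTf hp u v) : swp hp s = (u, v) := by
  have huv : u ≠ v := by
    intro h; rw [h] at h0; omega
  have hsm := hs
  rw [CTf, mem_filter, mem_range] at hsm
  obtain ⟨hs435, hc⟩ := hsm
  rcases hc with hc | hc
  · exact hc
  · exfalso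
    have hx : XX hp s = v := by rw [XX, hc]
    have hy : YY hp s = u := by rw [YY, hc]
    have h1 := (swp_spec hp hs435).1
    rw [hx, hy] at h1
    obtain ⟨s', hs'⟩ := Finset.card_eq_one.1 (cross_card_one hp huv)
    have hss : s = s' := by
      have := hs; rwa [hs', Finset.mem_singleton] at this
    have hall : ∀ r ∈ CTf hp u v, s ≤ r := by
      intro r hr
      rw [hs', Finset.mem_singleton] at hr
      omega
    have := ord_of_no_cross hp huv (le_of_lt hs435) hall h0
    omega

lemma mem_CT_self {t : ℕ} (ht : t < 435) : t ∈ CTf hp (XX hp t) (YY hp t) := by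
  rw [CTf, mem_filter, mem_range]
  exact ⟨ht, Or.inl (by simp [XX, YY])⟩

lemma left_lt {t : ℕ} (ht : t < 435) :
    hp.pos 0 (XX hp t) < hp.pos 0 (YY hp t) := by
  have hXY := XY_ne hp ht
  have hne : hp.pos 0 (XX hp t) ≠ hp.pos 0 (YY hp t) := pos_ne hp (by omega) hXY
  rcases lt_or_gt_of_ne hne with h | h
  · exact h
  · exfalso
    have hmem : t ∈ CTf hp (YY hp t) (XX hp t) := by
      rw [CTf, mem_filter, mem_range]
      exact ⟨ht, Or.inr (by simp [XX, YY])⟩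
    have := swp_of_cross hp h hmem
    have hx : XX hp t = YY hp t := by rw [XX, this]
    exact hXY hx

/-- membership in a labeled class -/
def isIn (w : Fin 10 → Fin 30) (z : Fin 30) : Prop := ∃ i, z = w i

instance (w : Fin 10 → Fin 30) (z : Fin 30) : Decidable (isIn w z) :=
  inferInstanceAs (Decidable (∃ i, z = w i))

instance (a b c : Fin 10 → Fin 30) (x y : Fin 30) : Decidable (SameClass a b c x y) :=
  inferInstanceAs (Decidable (_ ∨ _ ∨ _))

section Classes

variable (a b c : Fin 10 → Fin 30)

lemma a_inj (h3 : IsThreeDecompLabeling30 hp a b c) : Function.Injective a := by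
  intro i j h
  have := h3.1 (a₁ := Sum.inl i) (a₂ := Sum.inl j) (by simpa using h)
  simpa using this

lemma b_inj (h3 : IsThreeDecompLabeling30 hp a b c) : Function.Injective b := by
  intro i j h
  have := h3.1 (a₁ := Sum.inr (Sum.inl i)) (a₂ := Sum.inr (Sum.inl j)) (by simpa using h)
  simpa using this

lemma c_inj (h3 : IsThreeDecompLabeling30 hp a b c) : Function.Injective c := by
  intro i j h
  have := h3.1 (a₁ := Sum.inr (Sum.inr i)) (a₂ := Sum.inr (Sum.inr j)) (by simpa using h)
  simpa using this

lemma a_ne_b (h3 : IsThreeDecompLabeling30 hp a b c) (i j : Fin 10) : a i ≠ b j := by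
  intro h
  have := h3.1 (a₁ := Sum.inl i) (a₂ := Sum.inr (Sum.inl j)) (by simpa using h)
  simpa using this

lemma a_ne_c (h3 : IsThreeDecompLabeling30 hp a b c) (i j : Fin 10) : a i ≠ c j := by
  intro h
  have := h3.1 (a₁ := Sum.inl i) (a₂ := Sum.inr (Sum.inr j)) (by simpa using h)
  simpa using this

lemma b_ne_c (h3 : IsThreeDecompLabeling30 hp a b c) (i j : Fin 10) : b i ≠ c j := by
  intro h
  have := h3.1 (a₁ := Sum.inr (Sum.inl i)) (a₂ := Sum.inr (Sum.inr j)) (by simpa using h)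
  simpa using this

lemma class_total (h3 : IsThreeDecompLabeling30 hp a b c) (z : Fin 30) :
    isIn a z ∨ isIn b z ∨ isIn c z := by
  have hbij : Function.Bijective (Sum.elim a (Sum.elim b c)) :=
    (Fintype.bijective_iff_injective_and_card _).2 ⟨h3.1, by simp⟩
  obtain ⟨w, hw⟩ := hbij.2 z
  rcases w with i | i | i
  · exact Or.inl ⟨i, hw.symm⟩
  · exact Or.inr (Or.inl ⟨i, hw.symm⟩)
  · exact Or.inr (Or.inr ⟨i, hw.symm⟩)

lemma pos0_a (h3 : IsThreeDecompLabeling30 hp a b c) (i : Fin 10) :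
    hp.pos 0 (a i) = 10 - (i : ℕ) := h3.2.1 i

lemma pos0_b (h3 : IsThreeDecompLabeling30 hp a b c) (i : Fin 10) :
    hp.pos 0 (b i) = 11 + (i : ℕ) := h3.2.2.1 i

lemma pos0_c (h3 : IsThreeDecompLabeling30 hp a b c) (i : Fin 10) :
    hp.pos 0 (c i) = 21 + (i : ℕ) := h3.2.2.2.1 i

/-- the left element of a crossing is not of a "later" class than the right one -/
lemma not_b_a (h3 : IsThreeDecompLabeling30 hp a b c) {t : ℕ} (ht : t < 435)
    (hX : isIn b (XX hp t)) (hY : isIn a (YY hp t)) : False := by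
  obtain ⟨i, hi⟩ := hX
  obtain ⟨j, hj⟩ := hY
  have h := left_lt hp ht
  rw [hi, hj, pos0_b hp a b c h3, pos0_a hp a b c h3] at h
  have := j.isLt
  omega

lemma not_c_a (h3 : IsThreeDecompLabeling30 hp a b c) {t : ℕ} (ht : t < 435)
    (hX : isIn c (XX hp t)) (hY : isIn a (YY hp t)) : False := by
  obtain ⟨i, hi⟩ := hX
  obtain ⟨j, hj⟩ := hY
  have h := left_lt hp ht
  rw [hi, hj, pos0_c hp a b c h3, pos0_a hp a b c h3] at h
  have := j.isLt
  omega

lemma not_c_b (h3 : IsThreeDecompLabeling30 hp a b c) {t : ℕ} (ht : t < 435)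
    (hX : isIn c (XX hp t)) (hY : isIn b (YY hp t)) : False := by
  obtain ⟨i, hi⟩ := hX
  obtain ⟨j, hj⟩ := hY
  have h := left_lt hp ht
  rw [hi, hj, pos0_c hp a b c h3, pos0_b hp a b c h3] at h
  have := j.isLt
  omega

end Classes

end ThreeDecompAux
namespace ThreeDecompAux

open Finset

variable (hp : HalfPeriod 30)

/-- number of elements of the class `w` strictly to the right of gate `g` at time `t` -/
noncomputable def cnt (w : Fin 10 → Fin 30) (g t : ℕ) : ℤ :=
  ∑ i : Fin 10, if g < hp.pos t (w i) then 1 else 0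

lemma sum_ind (w : Fin 10 → Fin 30) (hw : Function.Injective w) (z : Fin 30) :
    ∑ i : Fin 10, (if w i = z then (1 : ℤ) else 0) = if isIn w z then 1 else 0 := by
  by_cases h : isIn w z
  · obtain ⟨i0, rfl⟩ := h
    rw [if_pos ⟨i0, rfl⟩]
    rw [Finset.sum_eq_single i0]
    · rw [if_pos rfl]
    · intro i _ hi
      exact if_neg (fun he => hi (hw he))
    · intro h'
      exact absurd (mem_univ i0) h'
  · rw [if_neg h]
    exact Finset.sum_eq_zero fun i _ => if_neg (fun he => h ⟨i, he.symm⟩)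

lemma cnt_step (w : Fin 10 → Fin 30) (hw : Function.Injective w) (g : ℕ) {t : ℕ}
    (ht : t < 435) :
    cnt hp w g (t + 1) = cnt hp w g t
      + (if gate hp t = g ∧ isIn w (XX hp t) then 1 else 0)
      - (if gate hp t = g ∧ isIn w (YY hp t) then 1 else 0) := by
  obtain ⟨h1, h2, h3, h4⟩ := swp_spec hp ht
  have hXY := XY_ne hp ht
  by_cases hpg : gate hp t = g
  · have hterm : ∀ i : Fin 10,
        (if g < hp.pos (t+1) (w i) then (1:ℤ) else 0)
          = (if g < hp.pos t (w i) then (1:ℤ) else 0)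
            + (if w i = XX hp t then 1 else 0) - (if w i = YY hp t then 1 else 0) := by
      intro i
      rw [gate] at hpg
      by_cases hx : w i = XX hp t
      · have hxy : ¬ (w i = YY hp t) := by rw [hx]; exact hXY
        rw [hx, h2, hpg, if_pos rfl, if_neg hXY]
        norm_num
      · by_cases hy : w i = YY hp t
        · have hyx : ¬ (YY hp t = XX hp t) := Ne.symm hXY
          rw [hy, h3, h1, hpg, if_neg hyx, if_pos rfl]
          norm_num
        · rw [h4 (w i) hx hy, if_neg hx, if_neg hy]
          ring
    have hgg : (gate hp t = g) = True := by simp [hpg]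
    rw [cnt, cnt, Finset.sum_congr rfl (fun i _ => hterm i), Finset.sum_sub_distrib,
      Finset.sum_add_distrib, sum_ind w hw, sum_ind w hw]
    simp only [hgg, true_and]
  · rw [if_neg (fun hh => hpg hh.1), if_neg (fun hh => hpg hh.1)]
    rw [cnt, cnt]
    have hterm : ∀ i : Fin 10,
        (if g < hp.pos (t+1) (w i) then (1:ℤ) else 0)
          = (if g < hp.pos t (w i) then (1:ℤ) else 0) := by
      intro i
      rw [gate] at hpg
      by_cases hx : w i = XX hp t
      · rw [hx, h2]
        have : hp.pos t (XX hp t) ≠ g := hpg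
        apply if_congr _ rfl rfl
        omega
      · by_cases hy : w i = YY hp t
        · rw [hy, h3, h1]
          have : hp.pos t (XX hp t) ≠ g := hpg
          apply if_congr _ rfl rfl
          omega
        · rw [h4 (w i) hx hy]
    rw [Finset.sum_congr rfl (fun i _ => hterm i)]
    ring

lemma cnt_tele (w : Fin 10 → Fin 30) (hw : Function.Injective w) (g : ℕ) {m : ℕ}
    (hm : m ≤ 435) :
    cnt hp w g m - cnt hp w g 0 =
      (((range m).filter (fun t => gate hp t = g ∧ isIn w (XX hp t))).card : ℤ)
        - ((range m).filter (fun t => gate hp t = g ∧ isIn w (YY hp t))).card := by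
  have h1 : ∀ t ∈ range m,
      cnt hp w g (t + 1) - cnt hp w g t
        = (if gate hp t = g ∧ isIn w (XX hp t) then (1:ℤ) else 0)
          - (if gate hp t = g ∧ isIn w (YY hp t) then (1:ℤ) else 0) := by
    intro t ht
    rw [mem_range] at ht
    rw [cnt_step hp w hw g (by omega)]
    ring
  calc cnt hp w g m - cnt hp w g 0
      = ∑ t ∈ range m, (cnt hp w g (t + 1) - cnt hp w g t) := (Finset.sum_range_sub _ m).symm
    _ = ∑ t ∈ range m, ((if gate hp t = g ∧ isIn w (XX hp t) then (1:ℤ) else 0)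
          - (if gate hp t = g ∧ isIn w (YY hp t) then (1:ℤ) else 0)) :=
        Finset.sum_congr rfl h1
    _ = _ := by
        rw [Finset.sum_sub_distrib, Finset.sum_boole, Finset.sum_boole]

section Endpoints

variable (a b c : Fin 10 → Fin 30)

lemma cnt_a_0 (h3 : IsThreeDecompLabeling30 hp a b c) {g : ℕ} (hg : 10 ≤ g) :
    cnt hp a g 0 = 0 := by
  rw [cnt]
  apply Finset.sum_eq_zero
  intro i _
  rw [pos0_a hp a b c h3 i]
  have := i.isLt
  apply if_neg
  omega

lemma cnt_a_435 (h3 : IsThreeDecompLabeling30 hp a b c) {g : ℕ} (hg : g ≤ 20) :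
    cnt hp a g 435 = 10 := by
  rw [cnt]
  have hterm : ∀ i : Fin 10, (if g < hp.pos 435 (a i) then (1:ℤ) else 0) = 1 := by
    intro i
    rw [pos_rev hp (a i), pos0_a hp a b c h3 i]
    have := i.isLt
    apply if_pos
    omega
  rw [Finset.sum_congr rfl (fun i _ => hterm i)]
  simp

lemma cnt_b_eq (h3 : IsThreeDecompLabeling30 hp a b c) {g : ℕ} (hg : 11 ≤ g)
    (hg2 : g ≤ 19) :
    cnt hp b g 435 = cnt hp b g 0 := by
  have h435 : cnt hp b g 435 = ∑ i : Fin 10, if g < 20 - (i : ℕ) then (1:ℤ) else 0 := by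
    rw [cnt]
    apply Finset.sum_congr rfl
    intro i _
    rw [pos_rev hp (b i), pos0_b hp a b c h3 i]
    have := i.isLt
    apply if_congr _ rfl rfl
    omega
  have h0 : cnt hp b g 0 = ∑ i : Fin 10, if g < 11 + (i : ℕ) then (1:ℤ) else 0 := by
    rw [cnt]
    apply Finset.sum_congr rfl
    intro i _
    rw [pos0_b hp a b c h3 i]
  rw [h435, h0]
  interval_cases g <;> decide

end Endpoints

end ThreeDecompAux
namespace ThreeDecompAux

open Finset

variable (hp : HalfPeriod 30) (a b c : Fin 10 → Fin 30)

lemma exT (h3 : IsThreeDecompLabeling30 hp a b c) :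
    ∃ t, t < 435 ∧ isIn c (YY hp t) ∧ ¬ isIn c (XX hp t) := by
  have hne : a 0 ≠ c 0 := a_ne_c hp a b c h3 0 0
  obtain ⟨s, hs⟩ := Finset.card_eq_one.1 (cross_card_one hp hne)
  have hmem : s ∈ CTf hp (a 0) (c 0) := by rw [hs]; exact Finset.mem_singleton_self s
  have h0 : hp.pos 0 (a 0) < hp.pos 0 (c 0) := by
    rw [pos0_a hp a b c h3, pos0_c hp a b c h3]
    omega
  have hswp := swp_of_cross hp h0 hmem
  have hs435 : s < 435 := by
    have := hmem
    rw [CTf, mem_filter, mem_range] at this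
    exact this.1
  refine ⟨s, hs435, ?_, ?_⟩
  · rw [YY, hswp]; exact ⟨0, rfl⟩
  · rw [XX, hswp]
    rintro ⟨i, hi⟩
    exact a_ne_c hp a b c h3 0 i hi

/-- The first step at which an element of `C` is transposed with an element of `A ∪ B`. -/
noncomputable def TT (h3 : IsThreeDecompLabeling30 hp a b c) : ℕ :=
  Nat.find (exT hp a b c h3)

lemma TT_lt (h3 : IsThreeDecompLabeling30 hp a b c) : TT hp a b c h3 < 435 :=
  (Nat.find_spec (exT hp a b c h3)).1

lemma TT_spec (h3 : IsThreeDecompLabeling30 hp a b c) :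
    isIn c (YY hp (TT hp a b c h3)) ∧ ¬ isIn c (XX hp (TT hp a b c h3)) :=
  ⟨(Nat.find_spec (exT hp a b c h3)).2.1, (Nat.find_spec (exT hp a b c h3)).2.2⟩

lemma no_c_lt_TT (h3 : IsThreeDecompLabeling30 hp a b c) {t : ℕ}
    (ht : t < TT hp a b c h3) (hY : isIn c (YY hp t)) : isIn c (XX hp t) := by
  have hmin := Nat.find_min (exT hp a b c h3) ht
  push_neg at hmin
  by_contra hX
  have ht435 : t < 435 := by
    have := TT_lt hp a b c h3; omega
  exact hX (hmin ht435 hY)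

/-- every `A`–`B` transposition happens before `TT` -/
lemma ab_lt_TT (h3 : IsThreeDecompLabeling30 hp a b c) {i j : Fin 10} {s : ℕ}
    (hs : s ∈ CTf hp (a i) (b j)) : s < TT hp a b c h3 := by
  obtain ⟨hY, hX⟩ := TT_spec hp a b c h3
  set T := TT hp a b c h3 with hTdef
  have hT435 : T < 435 := TT_lt hp a b c h3
  have hs435 : s < 435 := by
    have := hs; rw [CTf, mem_filter, mem_range] at this; exact this.1
  have h0 : hp.pos 0 (a i) < hp.pos 0 (b j) := by
    rw [pos0_a hp a b c h3, pos0_b hp a b c h3]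
    omega
  have hswp := swp_of_cross hp h0 hs
  -- the swap at time s is SwapsAt s (a i) (b j)
  have hXs : XX hp s = a i := by rw [XX, hswp]
  have hYs : YY hp s = b j := by rw [YY, hswp]
  obtain ⟨h1, h2, h3', h4⟩ := swp_spec hp hs435
  have hmovedX : hp.Moved s (XX hp s) := by rw [HalfPeriod.Moved, h2]; omega
  have hmovedY : hp.Moved s (YY hp s) := by rw [HalfPeriod.Moved, h3', h1]; omega
  obtain ⟨i0, hi0⟩ := hY
  obtain ⟨h1T, h2T, h3T, h4T⟩ := swp_spec hp hT435
  have hmovedXT : hp.Moved T (XX hp T) := by rw [HalfPeriod.Moved, h2T]; omega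
  have hmovedYT : hp.Moved T (YY hp T) := by rw [HalfPeriod.Moved, h3T, h1T]; omega
  have hswapT : hp.SwapsAt T (c i0) (XX hp T) := by
    refine ⟨?_, ?_, ?_⟩
    · intro h
      exact hX ⟨i0, h.symm⟩
    · rw [← hi0]; exact hmovedYT
    · exact hmovedXT
  have hABx : (∃ j', XX hp T = a j') ∨ (∃ j', XX hp T = b j') := by
    rcases class_total hp a b c h3 (XX hp T) with h | h | h
    · exact Or.inl h
    · exact Or.inr h
    · exact absurd h hX
  have := h3.2.2.2.2.1 s T (by rw [steps_eq]; exact hs435) (by rw [steps_eq]; exact hT435)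
    ⟨i, j, by rw [← hXs, ← hYs]; exact ⟨XY_ne hp hs435, hmovedX, hmovedY⟩⟩
    ⟨i0, XX hp T, hABx, hswapT⟩
  exact this

lemma cnt_a_TT (h3 : IsThreeDecompLabeling30 hp a b c) {g : ℕ} (hg : 11 ≤ g)
    (hg2 : g ≤ 19) : cnt hp a g (TT hp a b c h3) = 20 - g := by
  set T := TT hp a b c h3 with hTdef
  have hT435 : T < 435 := TT_lt hp a b c h3
  -- every b is to the left of every a at time T
  have hba : ∀ i j : Fin 10, hp.pos T (b j) < hp.pos T (a i) := by
    intro i j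
    have hne : a i ≠ b j := a_ne_b hp a b c h3 i j
    obtain ⟨s, hs⟩ := Finset.card_eq_one.1 (cross_card_one hp hne)
    have hmem : s ∈ CTf hp (a i) (b j) := by rw [hs]; exact Finset.mem_singleton_self s
    have hsT : s < T := ab_lt_TT hp a b c h3 hmem
    have h0 : hp.pos 0 (a i) < hp.pos 0 (b j) := by
      rw [pos0_a hp a b c h3, pos0_b hp a b c h3]; omega
    exact ord_of_crossed hp hne (by omega) hmem hsT h0
  -- every a is to the left of every c at time T
  have hac : ∀ i j : Fin 10, hp.pos T (a i) < hp.pos T (c j) := by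
    intro i j
    have hne : a i ≠ c j := a_ne_c hp a b c h3 i j
    obtain ⟨s, hs⟩ := Finset.card_eq_one.1 (cross_card_one hp hne)
    have hmem : s ∈ CTf hp (a i) (c j) := by rw [hs]; exact Finset.mem_singleton_self s
    have h0 : hp.pos 0 (a i) < hp.pos 0 (c j) := by
      rw [pos0_a hp a b c h3, pos0_c hp a b c h3]; omega
    have hTs : T ≤ s := by
      by_contra hcon
      push_neg at hcon
      have hswp := swp_of_cross hp h0 hmem
      have hYc : isIn c (YY hp s) := by rw [YY, hswp]; exact ⟨j, rfl⟩
      have hXc : isIn c (XX hp s) := no_c_lt_TT hp a b c h3 hcon hYc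
      obtain ⟨i', hi'⟩ := hXc
      rw [XX, hswp] at hi'
      exact a_ne_c hp a b c h3 i i' hi'
    have hall : ∀ r ∈ CTf hp (a i) (c j), T ≤ r := by
      intro r hr
      rw [hs, Finset.mem_singleton] at hr
      omega
    exact ord_of_no_cross hp hne (by omega) hall h0
  -- bounds for positions of a's at time T
  have hbound : ∀ i : Fin 10, 11 ≤ hp.pos T (a i) ∧ hp.pos T (a i) ≤ 20 := by
    intro i
    constructor
    · -- 10 b's strictly below
      have himg : (univ : Finset (Fin 10)).image (fun j => hp.pos T (b j))
          ⊆ Finset.Icc 1 (hp.pos T (a i) - 1) := by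
        intro z hz
        rw [Finset.mem_image] at hz
        obtain ⟨j, _, hj⟩ := hz
        rw [Finset.mem_Icc, ← hj]
        have hb1 := (posb hp (t := T) (by omega) (b j)).1
        have := hba i j
        omega
      have hcard : ((univ : Finset (Fin 10)).image (fun j => hp.pos T (b j))).card = 10 := by
        rw [Finset.card_image_of_injective _ (fun j1 j2 hj =>
          b_inj hp a b c h3 (hp.pos_inj T (by rw [hS]; omega) hj))]
        simp
      have := Finset.card_le_card himg
      rw [hcard, Nat.card_Icc] at this
      omega
    · -- 10 c's strictly above
      have himg : (univ : Finset (Fin 10)).image (fun j => hp.pos T (c j))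
          ⊆ Finset.Icc (hp.pos T (a i) + 1) 30 := by
        intro z hz
        rw [Finset.mem_image] at hz
        obtain ⟨j, _, hj⟩ := hz
        rw [Finset.mem_Icc, ← hj]
        have hb1 := (posb hp (t := T) (by omega) (c j)).2
        have := hac i j
        omega
      have hcard : ((univ : Finset (Fin 10)).image (fun j => hp.pos T (c j))).card = 10 := by
        rw [Finset.card_image_of_injective _ (fun j1 j2 hj =>
          c_inj hp a b c h3 (hp.pos_inj T (by rw [hS]; omega) hj))]
        simp
      have := Finset.card_le_card himg
      rw [hcard, Nat.card_Icc] at this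
      omega
  -- the positions of the a's at time T are exactly Icc 11 20
  have himgA : (univ : Finset (Fin 10)).image (fun i => hp.pos T (a i)) = Finset.Icc 11 20 := by
    apply Finset.eq_of_subset_of_card_le
    · intro z hz
      rw [Finset.mem_image] at hz
      obtain ⟨i, _, hi⟩ := hz
      rw [Finset.mem_Icc, ← hi]
      exact hbound i
    · rw [Finset.card_image_of_injective _ (fun j1 j2 hj =>
        a_inj hp a b c h3 (hp.pos_inj T (by rw [hS]; omega) hj)), Nat.card_Icc]
      simp
  -- now count
  have hinj : Function.Injective (fun i => hp.pos T (a i)) := fun j1 j2 hj =>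
    a_inj hp a b c h3 (hp.pos_inj T (by rw [hS]; omega) hj)
  have hcnt : cnt hp a g T = ((univ.filter (fun i : Fin 10 => g < hp.pos T (a i))).card : ℤ) := by
    rw [cnt, Finset.sum_boole]
  rw [hcnt]
  have himgf : (univ.filter (fun i : Fin 10 => g < hp.pos T (a i))).card
      = ((Finset.Icc 11 20).filter (fun z => g < z)).card := by
    rw [← himgA, Finset.filter_image]
    rw [Finset.card_image_of_injective _ hinj]
  rw [himgf]
  have hicc : (Finset.Icc 11 20).filter (fun z => g < z) = Finset.Icc (g + 1) 20 := by
    ext z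
    simp only [Finset.mem_filter, Finset.mem_Icc]
    omega
  rw [hicc, Nat.card_Icc]
  have : 20 + 1 - (g + 1) = 20 - g := by omega
  rw [this]
  push_cast
  omega

end ThreeDecompAux
namespace ThreeDecompAux

open Finset

variable (hp : HalfPeriod 30) (a b c : Fin 10 → Fin 30)

/-- steps before `m` at gate `g` whose left element is in class `w` and right in `w'` -/
noncomputable def sXY (w w' : Fin 10 → Fin 30) (g m : ℕ) : Finset ℕ :=
  (range m).filter (fun t => gate hp t = g ∧ isIn w (XX hp t) ∧ isIn w' (YY hp t))

lemma not_ab (h3 : IsThreeDecompLabeling30 hp a b c) (z : Fin 30) :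
    isIn a z → isIn b z → False := by
  rintro ⟨i, hi⟩ ⟨j, hj⟩
  exact a_ne_b hp a b c h3 i j (hi.symm.trans hj)

lemma not_ac (h3 : IsThreeDecompLabeling30 hp a b c) (z : Fin 30) :
    isIn a z → isIn c z → False := by
  rintro ⟨i, hi⟩ ⟨j, hj⟩
  exact a_ne_c hp a b c h3 i j (hi.symm.trans hj)

lemma not_bc (h3 : IsThreeDecompLabeling30 hp a b c) (z : Fin 30) :
    isIn b z → isIn c z → False := by
  rintro ⟨i, hi⟩ ⟨j, hj⟩
  exact b_ne_c hp a b c h3 i j (hi.symm.trans hj)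

lemma card_split_Y (h3 : IsThreeDecompLabeling30 hp a b c) (w : Fin 10 → Fin 30)
    (g : ℕ) {m : ℕ} (hm : m ≤ 435) :
    ((range m).filter (fun t => gate hp t = g ∧ isIn w (XX hp t))).card
      = (sXY hp w a g m).card + (sXY hp w b g m).card + (sXY hp w c g m).card := by
  set s := (range m).filter (fun t => gate hp t = g ∧ isIn w (XX hp t)) with hs
  have h1 : (s.filter (fun t => isIn a (YY hp t))).card
      + (s.filter (fun t => ¬ isIn a (YY hp t))).card = s.card :=
    Finset.card_filter_add_card_filter_not _
  have h2 : ((s.filter (fun t => ¬ isIn a (YY hp t))).filter (fun t => isIn b (YY hp t))).card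
      + ((s.filter (fun t => ¬ isIn a (YY hp t))).filter (fun t => ¬ isIn b (YY hp t))).card
      = (s.filter (fun t => ¬ isIn a (YY hp t))).card :=
    Finset.card_filter_add_card_filter_not _
  have ea : s.filter (fun t => isIn a (YY hp t)) = sXY hp w a g m := by
    rw [hs, sXY, Finset.filter_filter]
    apply Finset.filter_congr
    intro t _
    tauto
  have eb : (s.filter (fun t => ¬ isIn a (YY hp t))).filter (fun t => isIn b (YY hp t))
      = sXY hp w b g m := by
    rw [hs, sXY, Finset.filter_filter, Finset.filter_filter]
    apply Finset.filter_congr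
    intro t _
    constructor
    · rintro ⟨⟨hg', hx⟩, _, hb⟩; exact ⟨hg', hx, hb⟩
    · rintro ⟨hg', hx, hb⟩
      exact ⟨⟨hg', hx⟩, fun ha => not_ab hp a b c h3 _ ha hb, hb⟩
  have ec : (s.filter (fun t => ¬ isIn a (YY hp t))).filter (fun t => ¬ isIn b (YY hp t))
      = sXY hp w c g m := by
    rw [hs, sXY, Finset.filter_filter, Finset.filter_filter]
    apply Finset.filter_congr
    intro t _
    constructor
    · rintro ⟨⟨hg', hx⟩, hna, hnb⟩
      rcases class_total hp a b c h3 (YY hp t) with h | h | h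
      · exact absurd h hna
      · exact absurd h hnb
      · exact ⟨hg', hx, h⟩
    · rintro ⟨hg', hx, hc⟩
      exact ⟨⟨hg', hx⟩, fun ha => not_ac hp a b c h3 _ ha hc,
        fun hb => not_bc hp a b c h3 _ hb hc⟩
  rw [ea] at h1
  rw [eb, ec] at h2
  omega

lemma card_split_X (h3 : IsThreeDecompLabeling30 hp a b c) (w' : Fin 10 → Fin 30)
    (g : ℕ) {m : ℕ} (hm : m ≤ 435) :
    ((range m).filter (fun t => gate hp t = g ∧ isIn w' (YY hp t))).card
      = (sXY hp a w' g m).card + (sXY hp b w' g m).card + (sXY hp c w' g m).card := by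
  set s := (range m).filter (fun t => gate hp t = g ∧ isIn w' (YY hp t)) with hs
  have h1 : (s.filter (fun t => isIn a (XX hp t))).card
      + (s.filter (fun t => ¬ isIn a (XX hp t))).card = s.card :=
    Finset.card_filter_add_card_filter_not _
  have h2 : ((s.filter (fun t => ¬ isIn a (XX hp t))).filter (fun t => isIn b (XX hp t))).card
      + ((s.filter (fun t => ¬ isIn a (XX hp t))).filter (fun t => ¬ isIn b (XX hp t))).card
      = (s.filter (fun t => ¬ isIn a (XX hp t))).card :=
    Finset.card_filter_add_card_filter_not _
  have ea : s.filter (fun t => isIn a (XX hp t)) = sXY hp a w' g m := by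
    rw [hs, sXY, Finset.filter_filter]
    apply Finset.filter_congr
    intro t _
    tauto
  have eb : (s.filter (fun t => ¬ isIn a (XX hp t))).filter (fun t => isIn b (XX hp t))
      = sXY hp b w' g m := by
    rw [hs, sXY, Finset.filter_filter, Finset.filter_filter]
    apply Finset.filter_congr
    intro t _
    constructor
    · rintro ⟨⟨hg', hy⟩, _, hb⟩; exact ⟨hg', hb, hy⟩
    · rintro ⟨hg', hb, hy⟩
      exact ⟨⟨hg', hy⟩, fun ha => not_ab hp a b c h3 _ ha hb, hb⟩
  have ec : (s.filter (fun t => ¬ isIn a (XX hp t))).filter (fun t => ¬ isIn b (XX hp t))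
      = sXY hp c w' g m := by
    rw [hs, sXY, Finset.filter_filter, Finset.filter_filter]
    apply Finset.filter_congr
    intro t _
    constructor
    · rintro ⟨⟨hg', hy⟩, hna, hnb⟩
      rcases class_total hp a b c h3 (XX hp t) with h | h | h
      · exact absurd h hna
      · exact absurd h hnb
      · exact ⟨hg', h, hy⟩
    · rintro ⟨hg', hc, hy⟩
      exact ⟨⟨hg', hy⟩, fun ha => not_ac hp a b c h3 _ ha hc,
        fun hb => not_bc hp a b c h3 _ hb hc⟩
  rw [ea] at h1
  rw [eb, ec] at h2
  omega

lemma sBA_empty (h3 : IsThreeDecompLabeling30 hp a b c) (g : ℕ) {m : ℕ} (hm : m ≤ 435) :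
    sXY hp b a g m = ∅ := by
  rw [sXY, Finset.filter_eq_empty_iff]
  intro t ht
  rw [mem_range] at ht
  rintro ⟨_, hb, ha⟩
  exact not_b_a hp a b c h3 (by omega) hb ha

lemma sCA_empty (h3 : IsThreeDecompLabeling30 hp a b c) (g : ℕ) {m : ℕ} (hm : m ≤ 435) :
    sXY hp c a g m = ∅ := by
  rw [sXY, Finset.filter_eq_empty_iff]
  intro t ht
  rw [mem_range] at ht
  rintro ⟨_, hc, ha⟩
  exact not_c_a hp a b c h3 (by omega) hc ha

lemma sCB_empty (h3 : IsThreeDecompLabeling30 hp a b c) (g : ℕ) {m : ℕ} (hm : m ≤ 435) :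
    sXY hp c b g m = ∅ := by
  rw [sXY, Finset.filter_eq_empty_iff]
  intro t ht
  rw [mem_range] at ht
  rintro ⟨_, hc, hb⟩
  exact not_c_b hp a b c h3 (by omega) hc hb

lemma sAC_TT_empty (h3 : IsThreeDecompLabeling30 hp a b c) (g : ℕ) :
    sXY hp a c g (TT hp a b c h3) = ∅ := by
  rw [sXY, Finset.filter_eq_empty_iff]
  intro t ht
  rw [mem_range] at ht
  rintro ⟨_, ha, hc⟩
  exact not_ac hp a b c h3 _ ha (no_c_lt_TT hp a b c h3 ht hc)

lemma sAB_TT (h3 : IsThreeDecompLabeling30 hp a b c) (g : ℕ) :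
    sXY hp a b g (TT hp a b c h3) = sXY hp a b g 435 := by
  have hT435 : TT hp a b c h3 < 435 := TT_lt hp a b c h3
  rw [sXY, sXY]
  ext t
  simp only [mem_filter, mem_range]
  constructor
  · rintro ⟨ht, hcond⟩
    exact ⟨by omega, hcond⟩
  · rintro ⟨ht, hg', ⟨i, hi⟩, ⟨j, hj⟩⟩
    refine ⟨?_, hg', ⟨i, hi⟩, ⟨j, hj⟩⟩
    have hmem : t ∈ CTf hp (a i) (b j) := by
      rw [CTf, mem_filter, mem_range]
      refine ⟨ht, Or.inl ?_⟩
      rw [← hi, ← hj, XX, YY]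
    exact ab_lt_TT hp a b c h3 hmem

lemma sAB_card (h3 : IsThreeDecompLabeling30 hp a b c) {g : ℕ} (hg : 11 ≤ g)
    (hg2 : g ≤ 19) : ((sXY hp a b g 435).card : ℤ) = 20 - g := by
  have hT435 : TT hp a b c h3 < 435 := TT_lt hp a b c h3
  have htele := cnt_tele hp a (a_inj hp a b c h3) g (m := TT hp a b c h3) (by omega)
  rw [cnt_a_TT hp a b c h3 hg hg2, cnt_a_0 hp a b c h3 (by omega)] at htele
  rw [card_split_Y hp a b c h3 a g (by omega : TT hp a b c h3 ≤ 435),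
    card_split_X hp a b c h3 a g (by omega : TT hp a b c h3 ≤ 435)] at htele
  rw [sBA_empty hp a b c h3 g (by omega : TT hp a b c h3 ≤ 435),
    sCA_empty hp a b c h3 g (by omega : TT hp a b c h3 ≤ 435),
    sAC_TT_empty hp a b c h3 g, sAB_TT hp a b c h3 g] at htele
  simp only [Finset.card_empty] at htele
  push_cast at htele
  omega

lemma sAC_card (h3 : IsThreeDecompLabeling30 hp a b c) {g : ℕ} (hg : 11 ≤ g)
    (hg2 : g ≤ 19) : ((sXY hp a c g 435).card : ℤ) = g - 10 := by
  have htele := cnt_tele hp a (a_inj hp a b c h3) g (m := 435) le_rfl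
  rw [cnt_a_435 hp a b c h3 (by omega), cnt_a_0 hp a b c h3 (by omega)] at htele
  rw [card_split_Y hp a b c h3 a g (le_refl 435),
    card_split_X hp a b c h3 a g (le_refl 435)] at htele
  rw [sBA_empty hp a b c h3 g (le_refl 435), sCA_empty hp a b c h3 g (le_refl 435)] at htele
  simp only [Finset.card_empty] at htele
  have hab := sAB_card hp a b c h3 hg hg2
  push_cast at htele
  omega

lemma sBC_card (h3 : IsThreeDecompLabeling30 hp a b c) {g : ℕ} (hg : 11 ≤ g)
    (hg2 : g ≤ 19) : ((sXY hp b c g 435).card : ℤ) = 20 - g := by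
  have htele := cnt_tele hp b (b_inj hp a b c h3) g (m := 435) le_rfl
  rw [cnt_b_eq hp a b c h3 hg hg2] at htele
  rw [card_split_Y hp a b c h3 b g (le_refl 435),
    card_split_X hp a b c h3 b g (le_refl 435)] at htele
  rw [sBA_empty hp a b c h3 g (le_refl 435), sCB_empty hp a b c h3 g (le_refl 435)] at htele
  simp only [Finset.card_empty] at htele
  have hab := sAB_card hp a b c h3 hg hg2
  push_cast at htele
  omega

lemma same_iff (x y : Fin 30) :
    SameClass a b c x y ↔
      ((isIn a x ∧ isIn a y) ∨ (isIn b x ∧ isIn b y) ∨ (isIn c x ∧ isIn c y)) := by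
  constructor
  · rintro (⟨i, j, hx, hy⟩ | ⟨i, j, hx, hy⟩ | ⟨i, j, hx, hy⟩)
    · exact Or.inl ⟨⟨i, hx⟩, ⟨j, hy⟩⟩
    · exact Or.inr (Or.inl ⟨⟨i, hx⟩, ⟨j, hy⟩⟩)
    · exact Or.inr (Or.inr ⟨⟨i, hx⟩, ⟨j, hy⟩⟩)
  · rintro (⟨⟨i, hx⟩, ⟨j, hy⟩⟩ | ⟨⟨i, hx⟩, ⟨j, hy⟩⟩ | ⟨⟨i, hx⟩, ⟨j, hy⟩⟩)
    · exact Or.inl ⟨i, j, hx, hy⟩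
    · exact Or.inr (Or.inl ⟨i, j, hx, hy⟩)
    · exact Or.inr (Or.inr ⟨i, j, hx, hy⟩)

lemma notSame_iff (h3 : IsThreeDecompLabeling30 hp a b c) {t : ℕ} (ht : t < 435) :
    ¬ SameClass a b c (XX hp t) (YY hp t) ↔
      ((isIn a (XX hp t) ∧ isIn b (YY hp t)) ∨ (isIn a (XX hp t) ∧ isIn c (YY hp t))
        ∨ (isIn b (XX hp t) ∧ isIn c (YY hp t))) := by
  constructor
  · intro hns
    rcases class_total hp a b c h3 (XX hp t) with hxa | hxb | hxc <;>
      rcases class_total hp a b c h3 (YY hp t) with hya | hyb | hyc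
    · exact absurd ((same_iff a b c _ _).2 (Or.inl ⟨hxa, hya⟩)) hns
    · exact Or.inl ⟨hxa, hyb⟩
    · exact Or.inr (Or.inl ⟨hxa, hyc⟩)
    · exact absurd (not_b_a hp a b c h3 ht hxb hya) (fun h => h)
    · exact absurd ((same_iff a b c _ _).2 (Or.inr (Or.inl ⟨hxb, hyb⟩))) hns
    · exact Or.inr (Or.inr ⟨hxb, hyc⟩)
    · exact absurd (not_c_a hp a b c h3 ht hxc hya) (fun h => h)
    · exact absurd (not_c_b hp a b c h3 ht hxc hyb) (fun h => h)
    · exact absurd ((same_iff a b c _ _).2 (Or.inr (Or.inr ⟨hxc, hyc⟩))) hns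
  · rintro (⟨hxa, hyb⟩ | ⟨hxa, hyc⟩ | ⟨hxb, hyc⟩) hsame <;>
      rcases (same_iff a b c _ _).1 hsame with ⟨h1, h2⟩ | ⟨h1, h2⟩ | ⟨h1, h2⟩
    · exact not_ab hp a b c h3 _ h2 hyb
    · exact not_ab hp a b c h3 _ hxa h1
    · exact not_ac hp a b c h3 _ hxa h1
    · exact not_ac hp a b c h3 _ h2 hyc
    · exact not_bc hp a b c h3 _ h2 hyc
    · exact not_ac hp a b c h3 _ hxa h1
    · exact not_ab hp a b c h3 _ h1 hxb
    · exact not_bc hp a b c h3 _ h2 hyc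
    · exact not_bc hp a b c h3 _ hxb h1

lemma bichrom_card (h3 : IsThreeDecompLabeling30 hp a b c) {g : ℕ} (hg : 11 ≤ g)
    (hg2 : g ≤ 19) :
    ((((range 435).filter (fun t => gate hp t = g ∧
        ¬ SameClass a b c (XX hp t) (YY hp t)))).card : ℤ) = 30 - g := by
  have hsplit : (range 435).filter (fun t => gate hp t = g ∧
      ¬ SameClass a b c (XX hp t) (YY hp t))
      = sXY hp a b g 435 ∪ sXY hp a c g 435 ∪ sXY hp b c g 435 := by
    ext t
    simp only [mem_filter, mem_union, mem_range, sXY]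
    constructor
    · rintro ⟨ht, hg', hns⟩
      rcases (notSame_iff hp a b c h3 ht).1 hns with h | h | h
      · exact Or.inl (Or.inl ⟨by omega, hg', h⟩)
      · exact Or.inl (Or.inr ⟨by omega, hg', h⟩)
      · exact Or.inr ⟨by omega, hg', h⟩
    · rintro ((⟨ht, hg', h⟩ | ⟨ht, hg', h⟩) | ⟨ht, hg', h⟩)
      · exact ⟨ht, hg', (notSame_iff hp a b c h3 ht).2 (Or.inl h)⟩
      · exact ⟨ht, hg', (notSame_iff hp a b c h3 ht).2 (Or.inr (Or.inl h))⟩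
      · exact ⟨ht, hg', (notSame_iff hp a b c h3 ht).2 (Or.inr (Or.inr h))⟩
  rw [hsplit]
  have hd1 : Disjoint (sXY hp a b g 435) (sXY hp a c g 435) := by
    rw [Finset.disjoint_left]
    intro t h1 h2
    rw [sXY, mem_filter] at h1 h2
    exact not_bc hp a b c h3 _ h1.2.2.2 h2.2.2.2
  have hd2 : Disjoint (sXY hp a b g 435 ∪ sXY hp a c g 435) (sXY hp b c g 435) := by
    rw [Finset.disjoint_left]
    intro t h1 h2
    rw [Finset.mem_union] at h1
    rw [sXY, mem_filter] at h2
    rcases h1 with h1 | h1 <;> rw [sXY, mem_filter] at h1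
    · exact not_ab hp a b c h3 _ h1.2.2.1 h2.2.2.1
    · exact not_ab hp a b c h3 _ h1.2.2.1 h2.2.2.1
  rw [Finset.card_union_of_disjoint hd2, Finset.card_union_of_disjoint hd1]
  push_cast
  rw [sAB_card hp a b c h3 hg hg2, sAC_card hp a b c h3 hg hg2,
    sBC_card hp a b c h3 hg hg2]
  ring

end ThreeDecompAux
namespace ThreeDecompAux

open Finset

variable (hp : HalfPeriod 30) (a b c : Fin 10 → Fin 30)

lemma gateAt_iff {t : ℕ} (ht : t < 435) (i : ℕ) :
    hp.GateAt t i ↔ gate hp t = i := by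
  obtain ⟨h1, h2, h3, h4⟩ := swp_spec hp ht
  constructor
  · rintro ⟨x, y, hx, hy, hx1, hy1⟩
    have hmx : hp.Moved t x := by rw [HalfPeriod.Moved, hx1, hx]; omega
    rcases moved_cases hp ht hmx with hxX | hxY
    · rw [gate, ← hxX, hx]
    · exfalso
      rw [hxY] at hx hx1
      rw [h3] at hx1
      rw [h1] at hx
      omega
  · intro hg
    rw [gate] at hg
    exact ⟨XX hp t, YY hp t, hg, by rw [h1, hg], by rw [h2, hg], by rw [h3, hg]⟩

lemma swapsAt_XY {t : ℕ} (ht : t < 435) : hp.SwapsAt t (XX hp t) (YY hp t) := by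
  obtain ⟨h1, h2, h3, h4⟩ := swp_spec hp ht
  refine ⟨XY_ne hp ht, ?_, ?_⟩
  · rw [HalfPeriod.Moved, h2]; omega
  · rw [HalfPeriod.Moved, h3, h1]; omega

lemma same_symm {x y : Fin 30} (h : SameClass a b c x y) : SameClass a b c y x := by
  rcases h with ⟨i, j, hx, hy⟩ | ⟨i, j, hx, hy⟩ | ⟨i, j, hx, hy⟩
  · exact Or.inl ⟨j, i, hy, hx⟩
  · exact Or.inr (Or.inl ⟨j, i, hy, hx⟩)
  · exact Or.inr (Or.inr ⟨j, i, hy, hx⟩)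

lemma swaps_notSame_iff {t : ℕ} (ht : t < 435) :
    (∃ x y, hp.SwapsAt t x y ∧ ¬ SameClass a b c x y)
      ↔ ¬ SameClass a b c (XX hp t) (YY hp t) := by
  constructor
  · rintro ⟨x, y, ⟨hxy, hmx, hmy⟩, hns⟩
    rcases moved_cases hp ht hmx with hx | hx <;> rcases moved_cases hp ht hmy with hy | hy
    · exact absurd (hx.trans hy.symm) hxy
    · rwa [hx, hy] at hns
    · rw [hx, hy] at hns
      exact fun h => hns (same_symm a b c h)
    · exact absurd (hx.trans hy.symm) hxy
  · intro hns
    exact ⟨XX hp t, YY hp t, swapsAt_XY hp ht, hns⟩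

end ThreeDecompAux

/-- If `Π` is a 3-decomposable 30-half-period, then
`N_k^{bi}(Π) = 30` for every `k = 11, 12, 13, 14`. -/
theorem bichromatic_count_mid (hp : HalfPeriod 30) (a b c : Fin 10 → Fin 30)
    (h3 : IsThreeDecompLabeling30 hp a b c) :
    ∀ k : ℕ, 11 ≤ k → k ≤ 14 → NkBi hp a b c k = 30 := by
  intro k hk1 hk2
  open ThreeDecompAux Finset in
  classical
  have hset : {t : ℕ | t < HalfPeriod.steps 30 ∧ hp.Critical t k ∧
      ∃ x y, hp.SwapsAt t x y ∧ ¬ SameClass a b c x y}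
      = ((range 435).filter (fun t => (gate hp t = k ∨ gate hp t = 30 - k) ∧
          ¬ SameClass a b c (XX hp t) (YY hp t)) : Finset ℕ) := by
    ext t
    simp only [Set.mem_setOf_eq, Finset.coe_filter, Finset.mem_range, steps_eq]
    constructor
    · rintro ⟨ht, hcrit, hsw⟩
      refine ⟨ht, ?_, (swaps_notSame_iff hp a b c ht).1 hsw⟩
      rcases hcrit with h | h
      · exact Or.inl ((gateAt_iff hp ht k).1 h)
      · exact Or.inr ((gateAt_iff hp ht (30 - k)).1 h)
    · rintro ⟨ht, hg, hns⟩
      refine ⟨ht, ?_, (swaps_notSame_iff hp a b c ht).2 hns⟩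
      rcases hg with h | h
      · exact Or.inl ((gateAt_iff hp ht k).2 h)
      · exact Or.inr ((gateAt_iff hp ht (30 - k)).2 h)
  rw [NkBi, hset, Set.ncard_coe_finset]
  have hsplit : (range 435).filter (fun t => (gate hp t = k ∨ gate hp t = 30 - k) ∧
      ¬ SameClass a b c (XX hp t) (YY hp t))
      = ((range 435).filter (fun t => gate hp t = k ∧
          ¬ SameClass a b c (XX hp t) (YY hp t)))
        ∪ ((range 435).filter (fun t => gate hp t = 30 - k ∧
          ¬ SameClass a b c (XX hp t) (YY hp t))) := by
    ext t
    simp only [Finset.mem_filter, Finset.mem_union, Finset.mem_range]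
    tauto
  have hdisj : Disjoint ((range 435).filter (fun t => gate hp t = k ∧
      ¬ SameClass a b c (XX hp t) (YY hp t)))
      ((range 435).filter (fun t => gate hp t = 30 - k ∧
        ¬ SameClass a b c (XX hp t) (YY hp t))) := by
    rw [Finset.disjoint_left]
    intro t h1 h2
    rw [Finset.mem_filter] at h1 h2
    omega
  rw [hsplit, Finset.card_union_of_disjoint hdisj]
  have hc1 := bichrom_card hp a b c h3 (g := k) (by omega) (by omega)
  have hc2 := bichrom_card hp a b c h3 (g := 30 - k) (by omega) (by omega)
  omega
end

section
/- Let Π be a 3-decomposable 30-half-period. Then N_15^{bi}(Π) = 15, i.e., exactly 15 of the transpositions of Π that swap positions 15 and 16 are bichromatic. -/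
namespace HP30
open Finset

variable (hp : HalfPeriod 30)

lemma steps_eq : 30 * (30 - 1) / 2 = 435 := by norm_num

noncomputable def sx (t : ℕ) : Fin 30 :=
  if h : t < 435 then (hp.step t (by omega)).choose else 0

noncomputable def sy (t : ℕ) : Fin 30 :=
  if h : t < 435 then (hp.step t (by omega)).choose_spec.choose else 0

lemma sxy_spec {t : ℕ} (ht : t < 435) :
    hp.pos t (sy hp t) = hp.pos t (sx hp t) + 1 ∧
    hp.pos (t+1) (sx hp t) = hp.pos t (sx hp t) + 1 ∧
    hp.pos (t+1) (sy hp t) = hp.pos t (sx hp t) ∧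
    ∀ z, z ≠ sx hp t → z ≠ sy hp t → hp.pos (t+1) z = hp.pos t z := by
  simp only [sx, sy, dif_pos ht]
  exact (hp.step t (by omega)).choose_spec.choose_spec

lemma pos_bd {t : ℕ} (ht : t ≤ 435) (x : Fin 30) :
    1 ≤ hp.pos t x ∧ hp.pos t x ≤ 30 := hp.pos_mem t (by omega) x

lemma pos_inj' {t : ℕ} (ht : t ≤ 435) : Function.Injective (hp.pos t) :=
  hp.pos_inj t (by omega)

lemma sx_ne_sy {t : ℕ} (ht : t < 435) : sx hp t ≠ sy hp t := by
  intro h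
  have h1 := (sxy_spec hp ht).1
  rw [← h] at h1
  omega

lemma moved_iff {t : ℕ} (ht : t < 435) (z : Fin 30) :
    hp.Moved t z ↔ z = sx hp t ∨ z = sy hp t := by
  obtain ⟨h1, h2, h3, h4⟩ := sxy_spec hp ht
  constructor
  · intro hm
    by_contra hc
    push_neg at hc
    exact hm (h4 z hc.1 hc.2)
  · rintro (rfl | rfl) <;> unfold HalfPeriod.Moved <;> omega

lemma swapsAt_iff {t : ℕ} (ht : t < 435) (u v : Fin 30) :
    hp.SwapsAt t u v ↔ (u = sx hp t ∧ v = sy hp t) ∨ (u = sy hp t ∧ v = sx hp t) := by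
  constructor
  · rintro ⟨hne, hu, hv⟩
    rcases (moved_iff hp ht u).mp hu with rfl | rfl <;>
      rcases (moved_iff hp ht v).mp hv with rfl | rfl
    · exact absurd rfl hne
    · exact Or.inl ⟨rfl, rfl⟩
    · exact Or.inr ⟨rfl, rfl⟩
    · exact absurd rfl hne
  · rintro (⟨rfl, rfl⟩ | ⟨rfl, rfl⟩)
    · exact ⟨sx_ne_sy hp ht, (moved_iff hp ht _).mpr (Or.inl rfl),
        (moved_iff hp ht _).mpr (Or.inr rfl)⟩
    · exact ⟨(sx_ne_sy hp ht).symm, (moved_iff hp ht _).mpr (Or.inr rfl),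
        (moved_iff hp ht _).mpr (Or.inl rfl)⟩

lemma pos_swap {t : ℕ} (ht : t < 435) {u v : Fin 30} (hs : hp.SwapsAt t u v) :
    hp.pos (t+1) u = hp.pos t v ∧ hp.pos (t+1) v = hp.pos t u := by
  obtain ⟨h1, h2, h3, h4⟩ := sxy_spec hp ht
  rcases (swapsAt_iff hp ht u v).mp hs with ⟨rfl, rfl⟩ | ⟨rfl, rfl⟩ <;> omega

lemma ord_step {t : ℕ} (ht : t < 435) {u v : Fin 30} (huv : u ≠ v)
    (hn : ¬ hp.SwapsAt t u v) :
    (hp.pos (t+1) u < hp.pos (t+1) v ↔ hp.pos t u < hp.pos t v) := by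
  obtain ⟨h1, h2, h3, h4⟩ := sxy_spec hp ht
  by_cases hux : u = sx hp t
  · by_cases hvy : v = sy hp t
    · exact absurd ((swapsAt_iff hp ht u v).mpr (Or.inl ⟨hux, hvy⟩)) hn
    · have hvx : v ≠ sx hp t := fun h => huv (hux.trans h.symm)
      have h5 := h4 v hvx hvy
      have h6 : hp.pos t v ≠ hp.pos t (sx hp t) := fun h => hvx (pos_inj' hp (by omega) h)
      have h7 : hp.pos t v ≠ hp.pos t (sy hp t) := fun h => hvy (pos_inj' hp (by omega) h)
      subst hux; omega
  · by_cases huy : u = sy hp t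
    · by_cases hvx : v = sx hp t
      · exact absurd ((swapsAt_iff hp ht u v).mpr (Or.inr ⟨huy, hvx⟩)) hn
      · have hvy : v ≠ sy hp t := fun h => huv (huy.trans h.symm)
        have h5 := h4 v hvx hvy
        have h6 : hp.pos t v ≠ hp.pos t (sx hp t) := fun h => hvx (pos_inj' hp (by omega) h)
        have h7 : hp.pos t v ≠ hp.pos t (sy hp t) := fun h => hvy (pos_inj' hp (by omega) h)
        subst huy; omega
    · have h5 := h4 u hux huy
      by_cases hvx : v = sx hp t
      · have h6 : hp.pos t u ≠ hp.pos t (sx hp t) := fun h => hux (pos_inj' hp (by omega) h)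
        have h7 : hp.pos t u ≠ hp.pos t (sy hp t) := fun h => huy (pos_inj' hp (by omega) h)
        subst hvx; omega
      · by_cases hvy : v = sy hp t
        · have h6 : hp.pos t u ≠ hp.pos t (sx hp t) := fun h => hux (pos_inj' hp (by omega) h)
          have h7 : hp.pos t u ≠ hp.pos t (sy hp t) := fun h => huy (pos_inj' hp (by omega) h)
          subst hvy; omega
        · have h8 := h4 v hvx hvy
          omega

lemma ord_preserved {x y : Fin 30} (hxy : x ≠ y) {u v : ℕ} (huv : u ≤ v) (hv : v ≤ 435)
    (hno : ∀ s, u ≤ s → s < v → ¬ hp.SwapsAt s x y) :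
    (hp.pos v x < hp.pos v y ↔ hp.pos u x < hp.pos u y) := by
  induction v, huv using Nat.le_induction with
  | base => exact Iff.rfl
  | succ v hv' ih =>
    have hv4 : v < 435 := by omega
    rw [ord_step hp hv4 hxy (hno v hv' (by omega))]
    exact ih (by omega) (fun s hs hs' => hno s hs (by omega))

lemma exists_swap {x y : Fin 30} (hxy : x ≠ y) : ∃ t, t < 435 ∧ hp.SwapsAt t x y := by
  by_contra h
  push_neg at h
  have hord := ord_preserved hp hxy (Nat.zero_le 435) le_rfl
    (fun s _ hs => h s hs)
  have hrx := hp.reverse x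
  have hry := hp.reverse y
  rw [steps_eq] at hrx hry
  have hbx := pos_bd hp (le_refl 435) x
  have hby := pos_bd hp (le_refl 435) y
  have hbx0 := pos_bd hp (Nat.zero_le 435) x
  have hby0 := pos_bd hp (Nat.zero_le 435) y
  have hne : hp.pos 0 x ≠ hp.pos 0 y := fun h' => hxy (pos_inj' hp (Nat.zero_le 435) h')
  omega
noncomputable def gmap (t : Fin 435) : {p : Fin 30 × Fin 30 // p.1 < p.2} :=
  if h : sx hp t.1 < sy hp t.1 then ⟨(sx hp t.1, sy hp t.1), h⟩
  else ⟨(sy hp t.1, sx hp t.1), lt_of_le_of_ne (not_lt.mp h) (Ne.symm (sx_ne_sy hp t.2))⟩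

set_option maxRecDepth 10000 in
lemma card_pairs : Fintype.card {p : Fin 30 × Fin 30 // p.1 < p.2} = 435 := by decide

lemma gmap_val (t : Fin 435) : (gmap hp t).1 =
    if sx hp t.1 < sy hp t.1 then (sx hp t.1, sy hp t.1) else (sy hp t.1, sx hp t.1) := by
  rw [gmap]; split <;> rfl

lemma gmap_eq {t : ℕ} (ht : t < 435) {x y : Fin 30} (hs : hp.SwapsAt t x y)
    (hq : x < y) : gmap hp ⟨t, ht⟩ = ⟨(x, y), hq⟩ := by
  have hval : ((⟨t, ht⟩ : Fin 435) : ℕ) = t := rfl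
  apply Subtype.ext
  rw [gmap_val, hval]
  rcases (swapsAt_iff hp ht x y).mp hs with ⟨hx, hy⟩ | ⟨hx, hy⟩
  · rw [if_pos (show sx hp t < sy hp t from hx ▸ hy ▸ hq), ← hx, ← hy]
  · rw [if_neg (show ¬ sx hp t < sy hp t from hy ▸ hx ▸ asymm hq), ← hx, ← hy]

lemma g_surj : Function.Surjective (gmap hp) := by
  rintro ⟨⟨u, v⟩, huv⟩
  obtain ⟨t, ht, hs⟩ := exists_swap hp (ne_of_lt huv)
  exact ⟨⟨t, ht⟩, gmap_eq hp ht hs huv⟩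

lemma g_inj : Function.Injective (gmap hp) :=
  ((Fintype.bijective_iff_surjective_and_card _).mpr
    ⟨g_surj hp, by rw [Fintype.card_fin, card_pairs]⟩).injective

lemma swapsAt_symm {t : ℕ} {x y : Fin 30} (h : hp.SwapsAt t x y) : hp.SwapsAt t y x :=
  ⟨h.1.symm, h.2.2, h.2.1⟩

lemma swap_unique {s t : ℕ} {x y : Fin 30} (hs : hp.SwapsAt s x y) (ht : hp.SwapsAt t x y)
    (hs4 : s < 435) (ht4 : t < 435) : s = t := by
  rcases lt_trichotomy x y with hlt | heq | hgt
  · have h1 := gmap_eq hp hs4 hs hlt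
    have h2 := gmap_eq hp ht4 ht hlt
    have := g_inj hp (h1.trans h2.symm)
    exact congrArg Fin.val this
  · exact absurd heq hs.1
  · have h1 := gmap_eq hp hs4 (swapsAt_symm hp hs) hgt
    have h2 := gmap_eq hp ht4 (swapsAt_symm hp ht) hgt
    have := g_inj hp (h1.trans h2.symm)
    exact congrArg Fin.val this

lemma ord_init_at_swap {t : ℕ} {x y : Fin 30} (hs : hp.SwapsAt t x y) (ht : t < 435) :
    (hp.pos t x < hp.pos t y ↔ hp.pos 0 x < hp.pos 0 y) := by
  refine ord_preserved hp hs.1 (Nat.zero_le t) (by omega) (fun s _ hst hc => ?_)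
  exact absurd (swap_unique hp hc hs (by omega) ht) (by omega)

lemma swapped_before {s t : ℕ} {x y : Fin 30} (hs : hp.SwapsAt s x y) (hs4 : s < 435)
    (h0 : hp.pos 0 x < hp.pos 0 y) (hst : s < t) (ht : t ≤ 435) :
    hp.pos t y < hp.pos t x := by
  have h1 : hp.pos s x < hp.pos s y := (ord_init_at_swap hp hs hs4).mpr h0
  obtain ⟨h2, h3⟩ := pos_swap hp hs4 hs
  have h4 : hp.pos (s+1) y < hp.pos (s+1) x := by omega
  have h5 := ord_preserved hp (x := y) (y := x) hs.1.symm (show s + 1 ≤ t by omega) ht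
    (fun s' hs' hs'' hc => by
      have := swap_unique hp (swapsAt_symm hp hc) hs (by omega) hs4
      omega)
  omega

lemma not_swapped_before {t : ℕ} {x y : Fin 30} (hxy : x ≠ y)
    (hns : ∀ s, s < t → ¬ hp.SwapsAt s x y) (ht : t ≤ 435) :
    (hp.pos t x < hp.pos t y ↔ hp.pos 0 x < hp.pos 0 y) :=
  ord_preserved hp hxy (Nat.zero_le t) ht (fun s _ hst => hns s hst)

lemma pos_upper {t : ℕ} (ht : t ≤ 435) (x : Fin 30) (S : Finset (Fin 30))
    (hcard : 20 ≤ S.card) (h : ∀ y ∈ S, hp.pos t x < hp.pos t y) : hp.pos t x ≤ 10 := by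
  have himg : S.image (hp.pos t) ⊆ Finset.Ioc (hp.pos t x) 30 := by
    intro p hpm
    obtain ⟨y, hy, rfl⟩ := Finset.mem_image.mp hpm
    exact Finset.mem_Ioc.mpr ⟨h y hy, (pos_bd hp ht y).2⟩
  have hc : (S.image (hp.pos t)).card = S.card := Finset.card_image_of_injective S (pos_inj' hp ht)
  have := Finset.card_le_card himg
  rw [hc, Nat.card_Ioc] at this
  omega

lemma pos_lower {t : ℕ} (ht : t ≤ 435) (x : Fin 30) (S : Finset (Fin 30))
    (hcard : 20 ≤ S.card) (h : ∀ y ∈ S, hp.pos t y < hp.pos t x) : 21 ≤ hp.pos t x := by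
  have himg : S.image (hp.pos t) ⊆ Finset.Ico 1 (hp.pos t x) := by
    intro p hpm
    obtain ⟨y, hy, rfl⟩ := Finset.mem_image.mp hpm
    exact Finset.mem_Ico.mpr ⟨(pos_bd hp ht y).1, h y hy⟩
  have hc : (S.image (hp.pos t)).card = S.card := Finset.card_image_of_injective S (pos_inj' hp ht)
  have := Finset.card_le_card himg
  rw [hc, Nat.card_Ico] at this
  omega

section Labeling

variable (a b c : Fin 10 → Fin 30)

lemma a_inj (h3 : IsThreeDecompLabeling30 hp a b c) : Function.Injective a := fun i j h => by
  have := h3.1 (a₁ := Sum.inl i) (a₂ := Sum.inl j) (by simpa using h)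
  simpa using this

lemma b_inj (h3 : IsThreeDecompLabeling30 hp a b c) : Function.Injective b := fun i j h => by
  have := h3.1 (a₁ := Sum.inr (Sum.inl i)) (a₂ := Sum.inr (Sum.inl j)) (by simpa using h)
  simpa using this

lemma c_inj (h3 : IsThreeDecompLabeling30 hp a b c) : Function.Injective c := fun i j h => by
  have := h3.1 (a₁ := Sum.inr (Sum.inr i)) (a₂ := Sum.inr (Sum.inr j)) (by simpa using h)
  simpa using this

lemma ab_ne (h3 : IsThreeDecompLabeling30 hp a b c) (i j : Fin 10) : a i ≠ b j := fun h => by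
  have := h3.1 (a₁ := Sum.inl i) (a₂ := Sum.inr (Sum.inl j)) (by simpa using h)
  simp at this

lemma ac_ne (h3 : IsThreeDecompLabeling30 hp a b c) (i j : Fin 10) : a i ≠ c j := fun h => by
  have := h3.1 (a₁ := Sum.inl i) (a₂ := Sum.inr (Sum.inr j)) (by simpa using h)
  simp at this

lemma bc_ne (h3 : IsThreeDecompLabeling30 hp a b c) (i j : Fin 10) : b i ≠ c j := fun h => by
  have := h3.1 (a₁ := Sum.inr (Sum.inl i)) (a₂ := Sum.inr (Sum.inr j)) (by simpa using h)
  simp at this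

lemma classify (h3 : IsThreeDecompLabeling30 hp a b c) (x : Fin 30) :
    (∃ i, x = a i) ∨ (∃ i, x = b i) ∨ (∃ i, x = c i) := by
  have hsurj : Function.Surjective (Sum.elim a (Sum.elim b c)) :=
    ((Fintype.bijective_iff_injective_and_card _).mpr ⟨h3.1, by simp⟩).surjective
  obtain ⟨s, hs⟩ := hsurj x
  rcases s with i | i | i
  · exact Or.inl ⟨i, hs.symm⟩
  · exact Or.inr (Or.inl ⟨i, hs.symm⟩)
  · exact Or.inr (Or.inr ⟨i, hs.symm⟩)

lemma same_symm {x y : Fin 30} (h : SameClass a b c x y) : SameClass a b c y x := by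
  rcases h with ⟨i, j, rfl, rfl⟩ | ⟨i, j, rfl, rfl⟩ | ⟨i, j, rfl, rfl⟩
  · exact Or.inl ⟨j, i, rfl, rfl⟩
  · exact Or.inr (Or.inl ⟨j, i, rfl, rfl⟩)
  · exact Or.inr (Or.inr ⟨j, i, rfl, rfl⟩)

end Labeling

section Counting

open scoped Classical

variable (a b c : Fin 10 → Fin 30)

lemma steps30 : HalfPeriod.steps 30 = 435 := by norm_num [HalfPeriod.steps]

/-- the bichromatic-halving predicate -/
def Bi (t : ℕ) : Prop :=
  hp.Critical t 15 ∧ ∃ x y, hp.SwapsAt t x y ∧ ¬ SameClass a b c x y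

lemma crit15 (t : ℕ) : hp.Critical t 15 ↔ hp.GateAt t 15 := by
  unfold HalfPeriod.Critical
  norm_num

/-- number of members of the family `d` on the left of the halving boundary -/
def alph (d : Fin 10 → Fin 30) (t : ℕ) : ℕ :=
  (Finset.univ.filter fun i : Fin 10 => hp.pos t (d i) ≤ 15).card

lemma gate_pos {t : ℕ} (ht : t < 435) (hg : hp.GateAt t 15) :
    hp.pos t (sx hp t) = 15 := by
  obtain ⟨x', y', hx1, hy1, hx2, hy2⟩ := hg
  obtain ⟨h1, h2, h3, h4⟩ := sxy_spec hp ht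
  have hmx : x' = sx hp t ∨ x' = sy hp t :=
    (moved_iff hp ht x').mp (by unfold HalfPeriod.Moved; omega)
  have hmy : y' = sx hp t ∨ y' = sy hp t :=
    (moved_iff hp ht y').mp (by unfold HalfPeriod.Moved; omega)
  rcases hmx with rfl | rfl
  · exact hx1
  · rcases hmy with rfl | rfl <;> omega

lemma gate_of {t : ℕ} (ht : t < 435) (h15 : hp.pos t (sx hp t) = 15) :
    hp.GateAt t 15 := by
  obtain ⟨h1, h2, h3, h4⟩ := sxy_spec hp ht
  exact ⟨sx hp t, sy hp t, h15, by omega, by omega, by omega⟩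

lemma card_nogate {t : ℕ} (ht : t < 435) (hng : hp.pos t (sx hp t) ≠ 15)
    (d : Fin 10 → Fin 30) : alph hp d (t+1) = alph hp d t := by
  obtain ⟨h1, h2, h3, h4⟩ := sxy_spec hp ht
  unfold alph
  congr 1
  refine Finset.filter_congr fun i _ => ?_
  by_cases hix : d i = sx hp t
  · rw [hix]; omega
  · by_cases hiy : d i = sy hp t
    · rw [hiy]; omega
    · rw [h4 (d i) hix hiy]

lemma card_within {t : ℕ} (ht : t < 435) (h15 : hp.pos t (sx hp t) = 15)
    {d : Fin 10 → Fin 30} (hd : Function.Injective d) {i0 j0 : Fin 10}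
    (hx : d i0 = sx hp t) (hy : d j0 = sy hp t) :
    alph hp d (t+1) = alph hp d t := by
  obtain ⟨h1, h2, h3, h4⟩ := sxy_spec hp ht
  have hij : i0 ≠ j0 := fun h => sx_ne_sy hp ht (hx ▸ h ▸ hy)
  have hkey : (Finset.univ.filter fun i : Fin 10 => hp.pos (t+1) (d i) ≤ 15) =
      insert j0 ((Finset.univ.filter fun i : Fin 10 => hp.pos t (d i) ≤ 15).erase i0) := by
    ext i
    simp only [Finset.mem_insert, Finset.mem_erase, Finset.mem_filter, Finset.mem_univ,
      true_and]
    by_cases hi : i = j0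
    · rw [hi, hy, h3]
      simp [h15]
    · by_cases hi0 : i = i0
      · rw [hi0, hx, h2, h15]
        simp [hij]
      · have hdx : d i ≠ sx hp t := fun h => hi0 (hd (h.trans hx.symm))
        have hdy : d i ≠ sy hp t := fun h => hi (hd (h.trans hy.symm))
        rw [h4 (d i) hdx hdy]
        simp [hi, hi0]
  unfold alph
  rw [hkey]
  have hj0 : j0 ∉ (Finset.univ.filter fun i : Fin 10 => hp.pos t (d i) ≤ 15).erase i0 := by
    simp only [Finset.mem_erase, Finset.mem_filter, Finset.mem_univ, true_and]
    rw [hy]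
    omega
  have hi0 : i0 ∈ (Finset.univ.filter fun i : Fin 10 => hp.pos t (d i) ≤ 15) := by
    simp only [Finset.mem_filter, Finset.mem_univ, true_and]
    rw [hx, h15]
  rw [Finset.card_insert_of_notMem hj0, Finset.card_erase_of_mem hi0]
  have : 1 ≤ (Finset.univ.filter fun i : Fin 10 => hp.pos t (d i) ≤ 15).card :=
    Finset.card_pos.mpr ⟨i0, hi0⟩
  omega

lemma card_exit {t : ℕ} (ht : t < 435) (h15 : hp.pos t (sx hp t) = 15)
    {d : Fin 10 → Fin 30} (hd : Function.Injective d) {i0 : Fin 10}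
    (hx : d i0 = sx hp t) (hy : ∀ i, d i ≠ sy hp t) :
    alph hp d t = alph hp d (t+1) + 1 := by
  obtain ⟨h1, h2, h3, h4⟩ := sxy_spec hp ht
  have hkey : (Finset.univ.filter fun i : Fin 10 => hp.pos (t+1) (d i) ≤ 15) =
      (Finset.univ.filter fun i : Fin 10 => hp.pos t (d i) ≤ 15).erase i0 := by
    ext i
    simp only [Finset.mem_erase, Finset.mem_filter, Finset.mem_univ, true_and]
    by_cases hi0 : i = i0
    · rw [hi0, hx, h2, h15]
      simp
    · have hdx : d i ≠ sx hp t := fun h => hi0 (hd (h.trans hx.symm))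
      rw [h4 (d i) hdx (hy i)]
      simp [hi0]
  have hi0 : i0 ∈ (Finset.univ.filter fun i : Fin 10 => hp.pos t (d i) ≤ 15) := by
    simp only [Finset.mem_filter, Finset.mem_univ, true_and]
    rw [hx, h15]
  have : 1 ≤ (Finset.univ.filter fun i : Fin 10 => hp.pos t (d i) ≤ 15).card :=
    Finset.card_pos.mpr ⟨i0, hi0⟩
  unfold alph
  rw [hkey, Finset.card_erase_of_mem hi0]
  omega

lemma card_other {t : ℕ} (ht : t < 435) {d : Fin 10 → Fin 30}
    (h : ∀ i, d i ≠ sx hp t ∧ d i ≠ sy hp t) :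
    alph hp d (t+1) = alph hp d t := by
  obtain ⟨h1, h2, h3, h4⟩ := sxy_spec hp ht
  unfold alph
  congr 1
  refine Finset.filter_congr fun i _ => ?_
  rw [h4 (d i) (h i).1 (h i).2]

/-- the first time a `B`–`C` transposition occurs -/
noncomputable def t2 : ℕ := sInf {t | t < 435 ∧ ∃ i j, hp.SwapsAt t (b i) (c j)}

lemma t2_spec (h3 : IsThreeDecompLabeling30 hp a b c) :
    t2 hp b c < 435 ∧ ∃ i j, hp.SwapsAt (t2 hp b c) (b i) (c j) := by
  obtain ⟨t, ht, hs⟩ := exists_swap hp (bc_ne hp a b c h3 0 0)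
  unfold t2
  exact Nat.sInf_mem (s := {t | t < 435 ∧ ∃ i j, hp.SwapsAt t (b i) (c j)}) ⟨t, ht, 0, 0, hs⟩

lemma t2_le {s : ℕ} {i j : Fin 10} (hs4 : s < 435) (hs : hp.SwapsAt s (b i) (c j)) :
    t2 hp b c ≤ s := Nat.sInf_le ⟨hs4, i, j, hs⟩

lemma ab_lt_t2 (h3 : IsThreeDecompLabeling30 hp a b c) {s : ℕ} {i j : Fin 10}
    (hs4 : s < 435) (hs : hp.SwapsAt s (a i) (b j)) : s < t2 hp b c := by
  obtain ⟨ht2, i2, j2, hsw2⟩ := t2_spec hp a b c h3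
  refine h3.2.2.2.2.1 s (t2 hp b c) ?_ ?_ ⟨i, j, hs⟩
    ⟨j2, b i2, Or.inr ⟨i2, rfl⟩, swapsAt_symm hp hsw2⟩ <;> rw [steps30] <;> omega

lemma ac_lt_t2 (h3 : IsThreeDecompLabeling30 hp a b c) {s : ℕ} {i j : Fin 10}
    (hs4 : s < 435) (hs : hp.SwapsAt s (a i) (c j)) : s < t2 hp b c := by
  obtain ⟨ht2, i2, j2, hsw2⟩ := t2_spec hp a b c h3
  refine h3.2.2.2.2.2 s (t2 hp b c) ?_ ?_ ⟨i, j, hs⟩ ⟨i2, j2, hsw2⟩ <;>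
    rw [steps30] <;> omega

lemma step_alpha (h3 : IsThreeDecompLabeling30 hp a b c) {t : ℕ} (ht : t < 435)
    (hnbc : ∀ i j, ¬ hp.SwapsAt t (b i) (c j)) :
    alph hp a t = alph hp a (t+1) + (if Bi hp a b c t then 1 else 0) := by
  by_cases hg : hp.GateAt t 15
  · have h15 := gate_pos hp ht hg
    have h16 : hp.pos t (sy hp t) = 16 := by
      have := (sxy_spec hp ht).1; omega
    have hswap : hp.SwapsAt t (sx hp t) (sy hp t) :=
      (swapsAt_iff hp ht _ _).mpr (Or.inl ⟨rfl, rfl⟩)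
    by_cases hsame : SameClass a b c (sx hp t) (sy hp t)
    · have hnb : ¬ Bi hp a b c t := by
        rintro ⟨-, x, y, hsw, hns⟩
        rcases (swapsAt_iff hp ht x y).mp hsw with ⟨rfl, rfl⟩ | ⟨rfl, rfl⟩
        · exact hns hsame
        · exact hns (same_symm a b c hsame)
      rw [if_neg hnb, add_zero]
      rcases hsame with ⟨i, j, hx, hy⟩ | ⟨i, j, hx, hy⟩ | ⟨i, j, hx, hy⟩
      · exact (card_within hp ht h15 (a_inj hp a b c h3) hx.symm hy.symm).symm
      · exact (card_other hp ht (fun k =>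
          ⟨fun h => ab_ne hp a b c h3 k i ((h.trans hx).symm ▸ rfl),
           fun h => ab_ne hp a b c h3 k j ((h.trans hy).symm ▸ rfl)⟩)).symm
      · exact (card_other hp ht (fun k =>
          ⟨fun h => ac_ne hp a b c h3 k i ((h.trans hx).symm ▸ rfl),
           fun h => ac_ne hp a b c h3 k j ((h.trans hy).symm ▸ rfl)⟩)).symm
    · have hb : Bi hp a b c t := ⟨(crit15 hp t).mpr hg, _, _, hswap, hsame⟩
      rw [if_pos hb]
      have hord0 : hp.pos 0 (sx hp t) < hp.pos 0 (sy hp t) :=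
        (ord_init_at_swap hp hswap ht).mp (by omega)
      have hpa := h3.2.1
      have hpb := h3.2.2.1
      have hpc := h3.2.2.2.1
      rcases classify hp a b c h3 (sx hp t) with ⟨i0, hx⟩ | ⟨i0, hx⟩ | ⟨i0, hx⟩ <;>
        rcases classify hp a b c h3 (sy hp t) with ⟨j0, hy⟩ | ⟨j0, hy⟩ | ⟨j0, hy⟩
      · exact absurd (Or.inl ⟨i0, j0, hx, hy⟩) hsame
      · exact card_exit hp ht h15 (a_inj hp a b c h3) hx.symm
          (fun k h => ab_ne hp a b c h3 k j0 (h.trans hy))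
      · exact card_exit hp ht h15 (a_inj hp a b c h3) hx.symm
          (fun k h => ac_ne hp a b c h3 k j0 (h.trans hy))
      · rw [hx, hy, hpb i0, hpa j0] at hord0
        exact absurd hord0 (by omega)
      · exact absurd (Or.inr (Or.inl ⟨i0, j0, hx, hy⟩)) hsame
      · rw [hx, hy] at hswap
        exact absurd hswap (hnbc i0 j0)
      · rw [hx, hy, hpc i0, hpa j0] at hord0
        exact absurd hord0 (by omega)
      · rw [hx, hy, hpc i0, hpb j0] at hord0
        have := j0.isLt
        exact absurd hord0 (by omega)
      · exact absurd (Or.inr (Or.inr ⟨i0, j0, hx, hy⟩)) hsame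
  · have hnb : ¬ Bi hp a b c t := fun h => hg ((crit15 hp t).mp h.1)
    rw [if_neg hnb, add_zero, card_nogate hp ht (fun h15 => hg (gate_of hp ht h15)) a]

lemma step_beta (h3 : IsThreeDecompLabeling30 hp a b c) {t : ℕ} (ht : t < 435)
    (hnab : ∀ i j, ¬ hp.SwapsAt t (a i) (b j))
    (hnac : ∀ i j, ¬ hp.SwapsAt t (a i) (c j)) :
    alph hp b t = alph hp b (t+1) + (if Bi hp a b c t then 1 else 0) := by
  by_cases hg : hp.GateAt t 15
  · have h15 := gate_pos hp ht hg
    have h16 : hp.pos t (sy hp t) = 16 := by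
      have := (sxy_spec hp ht).1; omega
    have hswap : hp.SwapsAt t (sx hp t) (sy hp t) :=
      (swapsAt_iff hp ht _ _).mpr (Or.inl ⟨rfl, rfl⟩)
    by_cases hsame : SameClass a b c (sx hp t) (sy hp t)
    · have hnb : ¬ Bi hp a b c t := by
        rintro ⟨-, x, y, hsw, hns⟩
        rcases (swapsAt_iff hp ht x y).mp hsw with ⟨rfl, rfl⟩ | ⟨rfl, rfl⟩
        · exact hns hsame
        · exact hns (same_symm a b c hsame)
      rw [if_neg hnb, add_zero]
      rcases hsame with ⟨i, j, hx, hy⟩ | ⟨i, j, hx, hy⟩ | ⟨i, j, hx, hy⟩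
      · exact (card_other hp ht (fun k =>
          ⟨fun h => ab_ne hp a b c h3 i k (h.trans hx).symm,
           fun h => ab_ne hp a b c h3 j k (h.trans hy).symm⟩)).symm
      · exact (card_within hp ht h15 (b_inj hp a b c h3) hx.symm hy.symm).symm
      · exact (card_other hp ht (fun k =>
          ⟨fun h => bc_ne hp a b c h3 k i (h.trans hx),
           fun h => bc_ne hp a b c h3 k j (h.trans hy)⟩)).symm
    · have hb : Bi hp a b c t := ⟨(crit15 hp t).mpr hg, _, _, hswap, hsame⟩
      rw [if_pos hb]
      have hord0 : hp.pos 0 (sx hp t) < hp.pos 0 (sy hp t) :=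
        (ord_init_at_swap hp hswap ht).mp (by omega)
      have hpa := h3.2.1
      have hpb := h3.2.2.1
      have hpc := h3.2.2.2.1
      rcases classify hp a b c h3 (sx hp t) with ⟨i0, hx⟩ | ⟨i0, hx⟩ | ⟨i0, hx⟩ <;>
        rcases classify hp a b c h3 (sy hp t) with ⟨j0, hy⟩ | ⟨j0, hy⟩ | ⟨j0, hy⟩
      · exact absurd (Or.inl ⟨i0, j0, hx, hy⟩) hsame
      · rw [hx, hy] at hswap
        exact absurd hswap (hnab i0 j0)
      · rw [hx, hy] at hswap
        exact absurd hswap (hnac i0 j0)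
      · rw [hx, hy, hpb i0, hpa j0] at hord0
        exact absurd hord0 (by omega)
      · exact absurd (Or.inr (Or.inl ⟨i0, j0, hx, hy⟩)) hsame
      · exact card_exit hp ht h15 (b_inj hp a b c h3) hx.symm
          (fun k h => bc_ne hp a b c h3 k j0 (h.trans hy))
      · rw [hx, hy, hpc i0, hpa j0] at hord0
        exact absurd hord0 (by omega)
      · rw [hx, hy, hpc i0, hpb j0] at hord0
        have := j0.isLt
        exact absurd hord0 (by omega)
      · exact absurd (Or.inr (Or.inr ⟨i0, j0, hx, hy⟩)) hsame
  · have hnb : ¬ Bi hp a b c t := fun h => hg ((crit15 hp t).mp h.1)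
    rw [if_neg hnb, add_zero, card_nogate hp ht (fun h15 => hg (gate_of hp ht h15)) b]

lemma telescope (f : ℕ → ℕ) (P : ℕ → Prop) {u v : ℕ} (huv : u ≤ v)
    (hstep : ∀ t, u ≤ t → t < v → f t = f (t+1) + (if P t then 1 else 0)) :
    f u = f v + ((Finset.Ico u v).filter P).card := by
  induction v, huv using Nat.le_induction with
  | base => simp
  | succ v hv ih =>
    have h1 := ih (fun t htu htv => hstep t htu (by omega))
    have h2 := hstep v hv (by omega)
    rw [Nat.Ico_succ_right_eq_insert_Ico hv, Finset.filter_insert]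
    by_cases hP : P v
    · rw [if_pos hP] at h2 ⊢
      rw [Finset.card_insert_of_notMem (by simp)]
      omega
    · rw [if_neg hP] at h2 ⊢
      omega

end Counting

end HP30


/-- If `Π` is a 3-decomposable 30-half-period, then
`N_15^{bi}(Π) = 15`: exactly 15 of the transpositions of `Π` that swap positions
`15` and `16` are bichromatic. -/
theorem bichromatic_count_halving (hp : HalfPeriod 30) (a b c : Fin 10 → Fin 30)
    (h3 : IsThreeDecompLabeling30 hp a b c) :
    NkBi hp a b c 15 = 15 := by
  classical
  obtain ⟨ht2, i2, j2, hsw2⟩ := HP30.t2_spec hp a b c h3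
  set T := HP30.t2 hp b c with hT
  have hT435 : T ≤ 435 := le_of_lt ht2
  have hpa := h3.2.1
  have hpb := h3.2.2.1
  have hpc := h3.2.2.2.1
  -- relative orders at time T
  have hba : ∀ i j : Fin 10, hp.pos T (b i) < hp.pos T (a j) := by
    intro i j
    obtain ⟨s, hs4, hs⟩ := HP30.exists_swap hp (HP30.ab_ne hp a b c h3 j i)
    exact HP30.swapped_before hp hs hs4 (by rw [hpa, hpb]; omega)
      (HP30.ab_lt_t2 hp a b c h3 hs4 hs) hT435
  have hca : ∀ i j : Fin 10, hp.pos T (c i) < hp.pos T (a j) := by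
    intro i j
    obtain ⟨s, hs4, hs⟩ := HP30.exists_swap hp (HP30.ac_ne hp a b c h3 j i)
    have := (j : ℕ).lt_irrefl
    exact HP30.swapped_before hp hs hs4 (by rw [hpa, hpc]; omega)
      (HP30.ac_lt_t2 hp a b c h3 hs4 hs) hT435
  have hbc : ∀ i j : Fin 10, hp.pos T (b i) < hp.pos T (c j) := by
    intro i j
    have hns : ∀ s, s < T → ¬ hp.SwapsAt s (b i) (c j) := by
      intro s hsT hsw
      have := HP30.t2_le hp b c (by omega) hsw
      omega
    have hi := i.isLt
    exact (HP30.not_swapped_before hp (HP30.bc_ne hp a b c h3 i j) hns hT435).mpr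
      (by rw [hpb, hpc]; omega)
  -- the families as finsets
  have himgcard : ∀ d : Fin 10 → Fin 30, Function.Injective d →
      (Finset.univ.image d).card = 10 := by
    intro d hd
    rw [Finset.card_image_of_injective _ hd, Finset.card_univ, Fintype.card_fin]
  have hdisjbc : Disjoint (Finset.univ.image b) (Finset.univ.image c) := by
    rw [Finset.disjoint_left]
    intro x hxb hxc
    obtain ⟨i, -, rfl⟩ := Finset.mem_image.mp hxb
    obtain ⟨j, -, hj⟩ := Finset.mem_image.mp hxc
    exact HP30.bc_ne hp a b c h3 i j hj.symm
  have hdisjac : Disjoint (Finset.univ.image a) (Finset.univ.image c) := by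
    rw [Finset.disjoint_left]
    intro x hxa hxc
    obtain ⟨i, -, rfl⟩ := Finset.mem_image.mp hxa
    obtain ⟨j, -, hj⟩ := Finset.mem_image.mp hxc
    exact HP30.ac_ne hp a b c h3 i j hj.symm
  -- positions at time T
  have ha_pos : ∀ j : Fin 10, 21 ≤ hp.pos T (a j) := by
    intro j
    refine HP30.pos_lower hp hT435 (a j) (Finset.univ.image b ∪ Finset.univ.image c) ?_ ?_
    · rw [Finset.card_union_of_disjoint hdisjbc,
        himgcard b (HP30.b_inj hp a b c h3), himgcard c (HP30.c_inj hp a b c h3)]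
    · intro y hy
      rcases Finset.mem_union.mp hy with hy | hy
      · obtain ⟨i, -, rfl⟩ := Finset.mem_image.mp hy
        exact hba i j
      · obtain ⟨i, -, rfl⟩ := Finset.mem_image.mp hy
        exact hca i j
  have hb_pos : ∀ i : Fin 10, hp.pos T (b i) ≤ 10 := by
    intro i
    refine HP30.pos_upper hp hT435 (b i) (Finset.univ.image a ∪ Finset.univ.image c) ?_ ?_
    · rw [Finset.card_union_of_disjoint hdisjac,
        himgcard a (HP30.a_inj hp a b c h3), himgcard c (HP30.c_inj hp a b c h3)]
    · intro y hy
      rcases Finset.mem_union.mp hy with hy | hy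
      · obtain ⟨j, -, rfl⟩ := Finset.mem_image.mp hy
        exact hba i j
      · obtain ⟨j, -, rfl⟩ := Finset.mem_image.mp hy
        exact hbc i j
  -- boundary values of the counters
  have hA0 : HP30.alph hp a 0 = 10 := by
    unfold HP30.alph
    rw [Finset.filter_true_of_mem (fun i _ => by rw [hpa i]; omega)]
    rw [Finset.card_univ, Fintype.card_fin]
  have hAT : HP30.alph hp a T = 0 := by
    unfold HP30.alph
    rw [Finset.filter_false_of_mem (fun i _ => by have := ha_pos i; omega)]
    exact Finset.card_empty
  have hBT : HP30.alph hp b T = 10 := by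
    unfold HP30.alph
    rw [Finset.filter_true_of_mem (fun i _ => by have := hb_pos i; omega)]
    rw [Finset.card_univ, Fintype.card_fin]
  have hB435 : HP30.alph hp b 435 = 5 := by
    unfold HP30.alph
    have hrev : ∀ i : Fin 10, hp.pos 435 (b i) = 20 - (i : ℕ) := by
      intro i
      have hr := hp.reverse (b i)
      rw [HP30.steps_eq, hpb i] at hr
      have := i.isLt
      omega
    rw [Finset.filter_congr (fun i _ => by rw [hrev i])]
    decide
  -- telescoping over the two phases
  have hN1 := HP30.telescope (fun t => HP30.alph hp a t) (HP30.Bi hp a b c)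
    (Nat.zero_le T) (fun t _ htT => by
      refine HP30.step_alpha hp a b c h3 (by omega) (fun i j hsw => ?_)
      have := HP30.t2_le hp b c (by omega) hsw
      omega)
  have hN2 := HP30.telescope (fun t => HP30.alph hp b t) (HP30.Bi hp a b c)
    hT435 (fun t htT ht4 => by
      refine HP30.step_beta hp a b c h3 (by omega) (fun i j hsw => ?_) (fun i j hsw => ?_)
      · have := HP30.ab_lt_t2 hp a b c h3 (by omega) hsw
        omega
      · have := HP30.ac_lt_t2 hp a b c h3 (by omega) hsw
        omega)
  rw [hA0, hAT] at hN1
  rw [hBT, hB435] at hN2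
  -- identify the counted set
  have hset : {t : ℕ | t < HalfPeriod.steps 30 ∧ hp.Critical t 15 ∧
      ∃ x y, hp.SwapsAt t x y ∧ ¬ SameClass a b c x y} =
      ↑((Finset.range 435).filter (HP30.Bi hp a b c)) := by
    ext t
    simp only [Set.mem_setOf_eq, Finset.coe_filter, Finset.mem_range, HP30.Bi, HP30.steps30]
  rw [NkBi, hset, Set.ncard_coe_finset]
  have hsplit : (Finset.range 435).filter (HP30.Bi hp a b c) =
      (Finset.Ico 0 T).filter (HP30.Bi hp a b c) ∪
      (Finset.Ico T 435).filter (HP30.Bi hp a b c) := by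
    rw [← Finset.filter_union, Finset.Ico_union_Ico_eq_Ico (Nat.zero_le T) hT435,
      Finset.range_eq_Ico]
  rw [hsplit, Finset.card_union_of_disjoint
    (Finset.disjoint_filter_filter (Finset.Ico_disjoint_Ico_consecutive 0 T 435))]
  omega
end

section
/- If D is a digraph in the class D_{10,3} with exactly 33 edges, then for all i, j ∈ {7, 8, 9, 10} with i > j, the edge from i to j is present in D. -/
/-- The outdegree of vertex `i` in the digraph with edge relation `E`. -/
noncomputable def outDeg (E : ℕ → ℕ → Prop) (i : ℕ) : ℕ := {j : ℕ | E i j}.ncard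

/-- The indegree of vertex `i` in the digraph with edge relation `E`. -/
noncomputable def inDeg (E : ℕ → ℕ → Prop) (i : ℕ) : ℕ := {j : ℕ | E j i}.ncard

/-- `E` is (the edge relation of) a digraph in the class `𝒟_{v,m}`: the vertex set is
`{1, …, v}`, every edge goes from a larger vertex to a smaller one, and every vertex `i`
satisfies `outdeg(i) ≤ m + indeg(i)`. -/
def MemClassD (v m : ℕ) (E : ℕ → ℕ → Prop) : Prop :=
  (∀ i j, E i j → 1 ≤ j ∧ j < i ∧ i ≤ v) ∧
  (∀ i, 1 ≤ i → i ≤ v → outDeg E i ≤ m + inDeg E i)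

/-- If `D` is a digraph in `𝒟_{10,3}` with exactly `33` edges, then
for all `i, j ∈ {7, 8, 9, 10}` with `i > j`, the edge from `i` to `j` is present in `D`. -/
theorem digraph_D10_3_with_33_edges (E : ℕ → ℕ → Prop)
    (hD : MemClassD 10 3 E)
    (hcard : {p : ℕ × ℕ | E p.1 p.2}.ncard = 33) :
    ∀ i j, 7 ≤ j → j < i → i ≤ 10 → E i j := by
  classical
  obtain ⟨hE, hdeg⟩ := hD
  intro i j hj hji hi
  by_contra hne
  set V : Finset ℕ := Finset.Icc 1 10 with hV
  set F : Finset (ℕ × ℕ) := (V ×ˢ V).filter (fun p => E p.1 p.2) with hF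
  -- outDeg / inDeg as finset cards
  have houtd : ∀ a, outDeg E a = (V.filter fun k => E a k).card := by
    intro a
    rw [outDeg, ← Set.ncard_coe_finset]
    congr 1
    ext k
    simp only [Set.mem_setOf_eq, Finset.coe_filter, hV, Finset.mem_Icc]
    refine ⟨fun h => ⟨?_, h⟩, fun h => h.2⟩
    have := hE a k h; omega
  have hind : ∀ a, inDeg E a = (V.filter fun k => E k a).card := by
    intro a
    rw [inDeg, ← Set.ncard_coe_finset]
    congr 1
    ext k
    simp only [Set.mem_setOf_eq, Finset.coe_filter, hV, Finset.mem_Icc]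
    refine ⟨fun h => ⟨?_, h⟩, fun h => h.2⟩
    have := hE k a h; omega
  -- total edges
  have hFcard : F.card = 33 := by
    rw [← Set.ncard_coe_finset, ← hcard]
    congr 1
    ext ⟨a, b⟩
    simp only [hF, Finset.coe_filter, Set.mem_setOf_eq, Finset.mem_product, hV,
      Finset.mem_Icc]
    refine ⟨fun h => h.2, fun h => ⟨?_, h⟩⟩
    have := hE a b h; omega
  have hfiber : F.card = ∑ a ∈ V, (F.filter fun p => p.1 = a).card := by
    apply Finset.card_eq_sum_card_fiberwise
    intro p hp
    exact (Finset.mem_product.mp (Finset.mem_filter.mp (Finset.mem_coe.mp hp)).1).1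
  have hfibercard : ∀ a ∈ V, (F.filter fun p => p.1 = a).card
      = (V.filter fun k => E a k).card := by
    intro a ha
    have himg : F.filter (fun p => p.1 = a)
        = (V.filter fun k => E a k).image (fun k => (a, k)) := by
      ext ⟨x, y⟩
      simp only [hF, Finset.mem_filter, Finset.mem_product, Finset.mem_image,
        Prod.mk.injEq]
      constructor
      · rintro ⟨⟨⟨hx, hy⟩, hxy⟩, rfl⟩
        exact ⟨y, ⟨hy, hxy⟩, rfl, rfl⟩
      · rintro ⟨k, ⟨hk, hEk⟩, rfl, rfl⟩
        exact ⟨⟨⟨ha, hk⟩, hEk⟩, rfl⟩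
    rw [himg, Finset.card_image_of_injective _ (fun k₁ k₂ h => (Prod.mk.injEq _ _ _ _).mp h |>.2)]
  -- pointwise bounds
  have hub : ∀ a ∈ V, (V.filter fun k => E a k).card ≤ min (a - 1) (13 - a) := by
    intro a ha
    simp only [hV, Finset.mem_Icc] at ha
    refine le_min ?_ ?_
    · calc (V.filter fun k => E a k).card ≤ (Finset.Icc 1 (a - 1)).card := by
            apply Finset.card_le_card
            intro k hk
            simp only [Finset.mem_filter] at hk
            have := hE a k hk.2
            simp only [Finset.mem_Icc]; omega
        _ = a - 1 := by rw [Nat.card_Icc]; omega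
    · have h1 := hdeg a ha.1 ha.2
      rw [houtd, hind] at h1
      have h2 : (V.filter fun k => E k a).card ≤ (Finset.Icc (a + 1) 10).card := by
        apply Finset.card_le_card
        intro k hk
        simp only [Finset.mem_filter] at hk
        have := hE k a hk.2
        simp only [Finset.mem_Icc]; omega
      rw [Nat.card_Icc] at h2
      omega
  -- strict bound at j
  have hjV : j ∈ V := by simp only [hV, Finset.mem_Icc]; omega
  have hstrict : (V.filter fun k => E j k).card < min (j - 1) (13 - j) := by
    have h1 := hdeg j (by omega) (by omega)
    rw [houtd, hind] at h1
    have h2 : (V.filter fun k => E k j).card ≤ (Finset.Icc (j + 1) 10 \ {i}).card := by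
      apply Finset.card_le_card
      intro k hk
      simp only [Finset.mem_filter] at hk
      have hk2 := hE k j hk.2
      simp only [Finset.mem_sdiff, Finset.mem_Icc, Finset.mem_singleton]
      constructor
      · omega
      · rintro rfl; exact hne hk.2
    have h3 : (Finset.Icc (j + 1) 10 \ {i}).card = 9 - j := by
      rw [Finset.card_sdiff_of_subset (by simp only [Finset.singleton_subset_iff, Finset.mem_Icc]; omega),
        Nat.card_Icc, Finset.card_singleton]
      omega
    omega
  have hsum : ∑ a ∈ V, (V.filter fun k => E a k).card < ∑ a ∈ V, min (a - 1) (13 - a) :=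
    Finset.sum_lt_sum hub ⟨j, hjV, hstrict⟩
  have htot : ∑ a ∈ V, min (a - 1) (13 - a) = 33 := by decide
  have : F.card < 33 := by
    rw [hfiber, Finset.sum_congr rfl hfibercard]
    omega
  omega
end
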